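/- arXiv:1203.5760 — 5 statements merged into one kernel-verified Lean document; each statement's English description precedes it below -/
import Mathlib

section
/- Let d ≥ 1 and L > 0. For every x ∈ B_L and every Lebesgue measurable set E ⊆ B_L, ν_L({σ : σ(x) ∈ E}) = (2Lω_d)^{−1}·∫_E |x − y|^{−(d−1)} dy. -/
open MeasureTheory Metric Set Filter
open scoped RealInnerProductSpace Classical

noncomputable section

/-- Euclidean space ℝ^d. -/
abbrev Euc (d : ℕ) := EuclideanSpace ℝ (Fin d)

/-- ω_d = d·m(B₁), the surface area of the unit sphere in ℝ^d. -/
def omegaD (d : ℕ) : ℝ := d * (volume (ball (0 : Euc d) 1)).toReal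

/-- κ_m = volume of the unit ball in ℝ^m (κ₀ = 1). -/
def kappa (m : ℕ) : ℝ := (volume (ball (0 : EuclideanSpace ℝ (Fin m)) 1)).toReal

/-- The reflection of ℝ^d across an affine hyperplane not containing the origin,
parametrized by the image `v ≠ 0` of the origin: `reflPt v` is the unique such
reflection with `reflPt v 0 = v`. -/
def reflPt {d : ℕ} (v : Euc d) (y : Euc d) : Euc d :=
  y + (1 - 2 * ⟪y, v⟫ / ⟪v, v⟫) • v

/-- The polarization f^σ of a function with respect to the reflection `reflPt v`:
the half-space `{y | ⟪y,v⟫ ≤ ‖v‖²/2}` is the closed half-space containing the origin. -/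
def polarize {d : ℕ} (v : Euc d) (f : Euc d → ℝ) (y : Euc d) : ℝ :=
  if ⟪y, v⟫ ≤ ‖v‖ ^ 2 / 2 then max (f y) (f (reflPt v y))
  else min (f y) (f (reflPt v y))

/-- The polarization A^σ of a set, characterized by χ_{A^σ} = (χ_A)^σ. -/
def polarizeSet {d : ℕ} (v : Euc d) (A : Set (Euc d)) : Set (Euc d) :=
  {y | if ⟪y, v⟫ ≤ ‖v‖ ^ 2 / 2 then y ∈ A ∨ reflPt v y ∈ A
       else y ∈ A ∧ reflPt v y ∈ A}

/-- Radius r_f(t) of the ball {f>t}*. -/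
def schwarzRad {d : ℕ} (f : Euc d → ℝ) (t : ℝ) : ℝ :=
  ((volume {x | t < f x}).toReal / (volume (ball (0 : Euc d) 1)).toReal) ^ (1 / (d : ℝ))

/-- The symmetric decreasing rearrangement f*(x) = ∫₀^∞ χ_{{f>t}*}(x) dt. -/
def symmDecr {d : ℕ} (f : Euc d → ℝ) (x : Euc d) : ℝ :=
  ∫ t in Ioi (0 : ℝ), if ‖x‖ < schwarzRad f t then (1 : ℝ) else 0

/-- The measure ν_L on reflections (parametrized by v = σ(0) ∈ B_{2L}∖{0}),
with density (2Lω_d)⁻¹·|v|^{-(d-1)} with respect to Lebesgue measure. -/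
def reflMeasure (d : ℕ) (L : ℝ) : Measure (Euc d) :=
  (volume.restrict (ball (0 : Euc d) (2 * L) \ {0})).withDensity
    (fun v => ENNReal.ofReal ((2 * L * omegaD d)⁻¹ * (‖v‖ ^ (d - 1))⁻¹))

/-- The law ν_L^⊗n of the first n random polarizations (σ₁, …, σₙ). -/
def polMeasure (d : ℕ) (L : ℝ) (n : ℕ) : Measure (Fin n → Euc d) :=
  Measure.pi fun _ => reflMeasure d L

/-- The iterated polarization f^{σ₁⋯σₙ} = (⋯(f^{σ₁})⋯)^{σₙ}. -/
def iterPolarize {d : ℕ} : {n : ℕ} → (Fin n → Euc d) → (Euc d → ℝ) → Euc d → ℝ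
  | 0, _, f => f
  | n + 1, σs, f => polarize (σs (Fin.last n)) (iterPolarize (fun i : Fin n => σs i.castSucc) f)

/-- One step of the center dynamics of polarized balls: the center stays put if it lies
in the closed half-space (bounded by the fixed hyperplane of the reflection `reflPt v`)
containing the origin, and is reflected otherwise. -/
def polarizeCenter {d : ℕ} (v : Euc d) (c : Euc d) : Euc d :=
  if ⟪c, v⟫ ≤ ‖v‖ ^ 2 / 2 then c else reflPt v c

/-- The center Cₙ of the n-fold polarization (x₀+B_r)^{σ₁⋯σₙ} = Cₙ+B_r of a ball. -/
def chain {d : ℕ} : {n : ℕ} → (Fin n → Euc d) → Euc d → Euc d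
  | 0, _, c => c
  | n + 1, σs, c => polarizeCenter (σs (Fin.last n)) (chain (fun i : Fin n => σs i.castSucc) c)

/-- The expected distance-to-origin zₙ = 𝔼(Xₙ) = 𝔼|Cₙ| of the center of n random
polarizations of the ball x₀ + B_r. -/
def zchain (d : ℕ) (L : ℝ) (x₀ : Euc d) (n : ℕ) : ℝ :=
  ∫ σs, ‖chain σs x₀‖ ∂(polMeasure d L n)

/-- The constant c_k (computed with respect to a unit vector u). -/
def cconst (d : ℕ) (L : ℝ) (u : Euc d) (k : ℕ) : ℝ :=
  (2 * L * omegaD d)⁻¹ * ∫ y in ball (0 : Euc d) 1, (1 - ‖y‖ ^ k) * (‖u - y‖ ^ (d - 1))⁻¹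

/- ===== auxiliary lemmas for stmt_3 ===== -/

section Stmt3Aux

/-- determinant of `id + φ.smulRight u` -/
lemma det_one_add_smulRight' {d : ℕ} (φ : Euc d →L[ℝ] ℝ) (u : Euc d) :
    LinearMap.det ((ContinuousLinearMap.id ℝ (Euc d) + φ.smulRight u : Euc d →L[ℝ] Euc d)
      : Euc d →ₗ[ℝ] Euc d) = 1 + φ u := by
  classical
  set b : Module.Basis (Fin d) ℝ (Euc d) := (EuclideanSpace.basisFun (Fin d) ℝ).toBasis with hb
  rw [← LinearMap.det_toMatrix b]
  have h : LinearMap.toMatrix b b ((ContinuousLinearMap.id ℝ (Euc d) + φ.smulRight u :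
      Euc d →L[ℝ] Euc d) : Euc d →ₗ[ℝ] Euc d)
      = 1 + Matrix.replicateCol (Fin 1) (fun i => b.repr u i) * Matrix.replicateRow (Fin 1) (fun j => φ (b j)) := by
    ext i j
    simp only [LinearMap.toMatrix_apply, ContinuousLinearMap.coe_coe,
      ContinuousLinearMap.add_apply, ContinuousLinearMap.id_apply,
      ContinuousLinearMap.smulRight_apply, map_add, Finsupp.add_apply,
      LinearMap.map_smul, Finsupp.smul_apply, smul_eq_mul, Matrix.add_apply, Matrix.mul_apply,
      Matrix.replicateCol_apply, Matrix.replicateRow_apply, Finset.univ_unique, Finset.sum_const, Finset.card_singleton,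
      one_smul]
    rw [b.repr_self_apply]
    by_cases hij : i = j
    · simp [hij, Matrix.one_apply, mul_comm]
    · simp [hij, Ne.symm hij, Matrix.one_apply, mul_comm]
  rw [h]; erw [Matrix.det_one_add_replicateCol_mul_replicateRow]
  congr 1
  calc dotProduct (fun j => φ (b j)) (fun i => b.repr u i)
      = ∑ j, b.repr u j • φ (b j) := by
        simp [dotProduct, mul_comm, smul_eq_mul]
    _ = ∑ j, φ (b.repr u j • b j) := by simp
    _ = φ u := by rw [← map_sum]; rw [b.sum_repr u]

lemma det_smul_id_add_smulRight' {d : ℕ} (hd : 1 ≤ d) {a : ℝ} (ha : a ≠ 0)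
    (φ : Euc d →L[ℝ] ℝ) (u : Euc d) :
    LinearMap.det ((a • ContinuousLinearMap.id ℝ (Euc d) + φ.smulRight u : Euc d →L[ℝ] Euc d)
      : Euc d →ₗ[ℝ] Euc d) = a ^ (d - 1) * (a + φ u) := by
  obtain ⟨k, rfl⟩ : ∃ k, d = k + 1 := ⟨d - 1, by omega⟩
  have key : (a • ContinuousLinearMap.id ℝ (Euc (k+1)) + φ.smulRight u : Euc (k+1) →L[ℝ] Euc (k+1))
      = a • (ContinuousLinearMap.id ℝ (Euc (k+1)) + φ.smulRight (a⁻¹ • u)) := by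
    ext h
    simp only [ContinuousLinearMap.add_apply, ContinuousLinearMap.smul_apply,
      ContinuousLinearMap.id_apply, ContinuousLinearMap.smulRight_apply, smul_add]
    rw [smul_comm a (φ h) (a⁻¹ • u), smul_smul a a⁻¹, mul_inv_cancel₀ ha, one_smul]
  rw [key]
  have : ((a • (ContinuousLinearMap.id ℝ (Euc (k+1)) + φ.smulRight (a⁻¹ • u)) :
      Euc (k+1) →L[ℝ] Euc (k+1)) : Euc (k+1) →ₗ[ℝ] Euc (k+1))
      = a • ((ContinuousLinearMap.id ℝ (Euc (k+1)) + φ.smulRight (a⁻¹ • u) :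
      Euc (k+1) →L[ℝ] Euc (k+1)) : Euc (k+1) →ₗ[ℝ] Euc (k+1)) := rfl
  rw [this, LinearMap.det_smul, det_one_add_smulRight', finrank_euclideanSpace_fin,
    _root_.map_smul, smul_eq_mul]
  simp only [Nat.add_sub_cancel, pow_succ]
  field_simp

def gfun {d : ℕ} (x v : Euc d) : ℝ := 1 - 2 * ⟪x, v⟫ / ‖v‖ ^ 2

lemma reflPt_eq_g {d : ℕ} (v x : Euc d) : reflPt v x = x + gfun x v • v := by
  rw [reflPt, gfun, real_inner_self_eq_norm_sq]

lemma normsq_reflPt {d : ℕ} (x v : Euc d) (hv : v ≠ 0) :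
    ‖reflPt v x‖ ^ 2 - ‖x‖ ^ 2 = gfun x v * ‖v‖ ^ 2 := by
  have hQ : ‖v‖ ^ 2 ≠ 0 := pow_ne_zero _ (norm_ne_zero_iff.mpr hv)
  rw [reflPt_eq_g, norm_add_sq_real, real_inner_smul_right, norm_smul]
  simp only [Real.norm_eq_abs, mul_pow, sq_abs, gfun]
  field_simp
  ring

lemma reflPt_sub {d : ℕ} (v x : Euc d) : reflPt v x - x = gfun x v • v := by
  rw [reflPt_eq_g]; abel

def Gmap {d : ℕ} (x v : Euc d) : Euc d →L[ℝ] ℝ :=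
  -((2 * ⟪x, v⟫) • ((-((‖v‖ ^ 2) ^ 2)⁻¹) • ((2:ℝ) • innerSL ℝ v)) +
    ((‖v‖ ^ 2)⁻¹) • ((2:ℝ) • innerSL ℝ x))

def Dmap {d : ℕ} (x v : Euc d) : Euc d →L[ℝ] Euc d :=
  gfun x v • ContinuousLinearMap.id ℝ (Euc d) + (Gmap x v).smulRight v

lemma hasFDerivAt_refl {d : ℕ} (x : Euc d) {v : Euc d} (hv : v ≠ 0) :
    HasFDerivAt (fun w => reflPt w x) (Dmap x v) v := by
  have hQ : ‖v‖ ^ 2 ≠ 0 := pow_ne_zero _ (norm_ne_zero_iff.mpr hv)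
  have hN : HasFDerivAt (fun w : Euc d => 2 * ⟪x, w⟫) ((2:ℝ) • innerSL ℝ x) v :=
    ((innerSL ℝ x).hasFDerivAt).const_mul 2
  have hD : HasFDerivAt (fun w : Euc d => ‖w‖ ^ 2) ((2:ℝ) • innerSL ℝ v) v := by
    have h2 : ((2:ℕ) • innerSL ℝ v : Euc d →L[ℝ] ℝ) = ((2:ℝ) • innerSL ℝ v) := by
      ext h; simp
    simpa [h2] using (hasStrictFDerivAt_norm_sq v).hasFDerivAt
  have hinv : HasFDerivAt (fun w : Euc d => (‖w‖ ^ 2)⁻¹)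
      ((-((‖v‖ ^ 2) ^ 2)⁻¹) • ((2:ℝ) • innerSL ℝ v)) v :=
    (hasDerivAt_inv hQ).comp_hasFDerivAt v hD
  have hprod := hN.mul hinv
  have hg : HasFDerivAt (fun w => gfun x w) (Gmap x v) v := by
    simp only [gfun, div_eq_mul_inv, Gmap]
    exact hprod.const_sub 1
  have h := (hg.smul (hasFDerivAt_id v)).const_add x
  have hfe : (fun w => x + gfun x w • w) = fun w => reflPt w x := by
    funext w; rw [reflPt_eq_g]
  simp only [id_eq] at h
  rw [← hfe]
  exact h

lemma Gmap_apply_self {d : ℕ} (x v : Euc d) (hv : v ≠ 0) :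
    Gmap x v v = 2 * ⟪x, v⟫ / ‖v‖ ^ 2 := by
  have hQ : ‖v‖ ^ 2 ≠ 0 := pow_ne_zero _ (norm_ne_zero_iff.mpr hv)
  have h1 : Gmap x v v = -((2 * ⟪x, v⟫) * ((-((‖v‖ ^ 2) ^ 2)⁻¹) * (2 * ⟪v, v⟫)) +
      (‖v‖ ^ 2)⁻¹ * (2 * ⟪x, v⟫)) := by
    simp only [Gmap, ContinuousLinearMap.neg_apply, ContinuousLinearMap.add_apply,
      ContinuousLinearMap.smul_apply, innerSL_apply_apply, smul_eq_mul]
  rw [h1, real_inner_self_eq_norm_sq]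
  field_simp
  ring

lemma det_Dmap {d : ℕ} (hd : 1 ≤ d) (x : Euc d) {v : Euc d} (hv : v ≠ 0)
    (hg : gfun x v ≠ 0) : (Dmap x v).det = gfun x v ^ (d - 1) := by
  have hQ : ‖v‖ ^ 2 ≠ 0 := pow_ne_zero _ (norm_ne_zero_iff.mpr hv)
  have h := det_smul_id_add_smulRight' hd hg (Gmap x v) v
  have h2 : (Dmap x v).det = LinearMap.det ((gfun x v • ContinuousLinearMap.id ℝ (Euc d) +
      (Gmap x v).smulRight v : Euc d →L[ℝ] Euc d) : Euc d →ₗ[ℝ] Euc d) := rfl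
  rw [h2, h, Gmap_apply_self x v hv]
  have h3 : gfun x v + 2 * ⟪x, v⟫ / ‖v‖ ^ 2 = 1 := by
    rw [gfun]; field_simp; ring
  rw [h3, mul_one]

lemma gfun_ne_zero {d : ℕ} {x v : Euc d} (hv : v ≠ 0) (hne : reflPt v x ≠ x) :
    gfun x v ≠ 0 := by
  intro h
  apply hne
  rw [reflPt_eq_g, h, zero_smul, add_zero]

lemma injOn_refl {d : ℕ} (x : Euc d) :
    Set.InjOn (fun v => reflPt v x) {v : Euc d | v ≠ 0 ∧ reflPt v x ≠ x} := by
  rintro v₁ ⟨hv₁, hne₁⟩ v₂ ⟨hv₂, hne₂⟩ h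
  simp only at h
  have hg₁ := gfun_ne_zero hv₁ hne₁
  have hg₂ := gfun_ne_zero hv₂ hne₂
  have hQ₁ : ‖v₁‖ ^ 2 ≠ 0 := pow_ne_zero _ (norm_ne_zero_iff.mpr hv₁)
  have hsm : gfun x v₁ • v₁ = gfun x v₂ • v₂ := by
    rw [← reflPt_sub, ← reflPt_sub, h]
  have hK : gfun x v₁ * ‖v₁‖ ^ 2 = gfun x v₂ * ‖v₂‖ ^ 2 := by
    rw [← normsq_reflPt x v₁ hv₁, ← normsq_reflPt x v₂ hv₂, h]
  have hsq : gfun x v₁ ^ 2 * ‖v₁‖ ^ 2 = gfun x v₂ ^ 2 * ‖v₂‖ ^ 2 := by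
    have := congrArg (fun w : Euc d => ‖w‖ ^ 2) hsm
    simpa [norm_smul, mul_pow, sq_abs] using this
  have hQ₂ : ‖v₂‖ ^ 2 ≠ 0 := pow_ne_zero _ (norm_ne_zero_iff.mpr hv₂)
  have hgg : gfun x v₁ = gfun x v₂ := by
    have h1 : gfun x v₁ * (gfun x v₂ * ‖v₂‖ ^ 2) = gfun x v₂ * (gfun x v₂ * ‖v₂‖ ^ 2) := by
      linear_combination hsq - gfun x v₁ * hK
    have h2 : gfun x v₂ * ‖v₂‖ ^ 2 ≠ 0 := mul_ne_zero hg₂ hQ₂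
    exact mul_right_cancel₀ h2 h1
  rw [hgg] at hsm
  exact smul_right_injective (Euc d) hg₂ hsm

lemma norm_reflPt_ne {d : ℕ} {x v : Euc d} (hv : v ≠ 0) (hne : reflPt v x ≠ x) :
    ‖reflPt v x‖ ≠ ‖x‖ := by
  intro h
  have h2 := normsq_reflPt x v hv
  rw [h, sub_self] at h2
  have hQ : ‖v‖ ^ 2 ≠ 0 := pow_ne_zero _ (norm_ne_zero_iff.mpr hv)
  exact mul_ne_zero (gfun_ne_zero hv hne) hQ h2.symm

lemma aux_alg {S T I β : ℝ} (hT : T ≠ 0) (hβ : β ≠ 0) (hβT : β * T = S)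
    (h2I : 2 * I = S - T) : 1 - 2 * (β * I) / (β ^ 2 * T) = β⁻¹ := by
  field_simp
  linear_combination -h2I + hβT

lemma exists_refl_eq {d : ℕ} (x : Euc d) {y : Euc d} (hxy : y ≠ x) (hn : ‖y‖ ≠ ‖x‖) :
    ∃ v : Euc d, v ≠ 0 ∧ reflPt v x = y := by
  set S : ℝ := ‖y‖ ^ 2 - ‖x‖ ^ 2 with hSdef
  set T : ℝ := ‖y - x‖ ^ 2 with hTdef
  have hS : S ≠ 0 := by
    simp only [hSdef, sub_ne_zero]
    exact fun h => hn ((pow_left_inj₀ (norm_nonneg _) (norm_nonneg _) two_ne_zero).mp h)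
  have hT : T ≠ 0 := pow_ne_zero _ (norm_ne_zero_iff.mpr (sub_ne_zero.mpr hxy))
  set β : ℝ := S / T with hβdef
  have hβ : β ≠ 0 := div_ne_zero hS hT
  refine ⟨β • (y - x), smul_ne_zero hβ (sub_ne_zero.mpr hxy), ?_⟩
  have hid : S = T + 2 * ⟪x, y - x⟫ := by
    have := norm_add_sq_real x (y - x)
    rw [add_sub_cancel] at this
    rw [hSdef, hTdef, this]; ring
  have h1 : ⟪x, β • (y - x)⟫ = β * ⟪x, y - x⟫ := real_inner_smul_right _ _ _
  have h2 : ‖β • (y - x)‖ ^ 2 = β ^ 2 * T := by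
    rw [norm_smul]; simp [mul_pow, sq_abs, hTdef]
  have h2I : 2 * ⟪x, y - x⟫ = S - T := by linarith [hid]
  have hβT : β * T = S := div_mul_cancel₀ S hT
  have hgv : gfun x (β • (y - x)) = β⁻¹ := by
    rw [gfun, h1, h2]
    exact aux_alg hT hβ hβT h2I
  rw [reflPt_eq_g, hgv, smul_smul, inv_mul_cancel₀ hβ, one_smul, add_sub_cancel]

lemma norm_lt_two_mul {d : ℕ} {L : ℝ} {x v : Euc d} (hx : ‖x‖ < L) (hv : v ≠ 0)
    (hne : reflPt v x ≠ x) (hy : ‖reflPt v x‖ < L) : ‖v‖ < 2 * L := by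
  set y := reflPt v x with hy'
  have hvpos : (0:ℝ) < ‖v‖ := norm_pos_iff.mpr hv
  have hyx : (0:ℝ) < ‖y - x‖ := norm_pos_iff.mpr (sub_ne_zero.mpr hne)
  have h1 : |gfun x v| * ‖v‖ = ‖y - x‖ := by
    rw [hy', reflPt_sub, norm_smul, Real.norm_eq_abs]
  have hgq := normsq_reflPt x v hv
  rw [← hy'] at hgq
  have h2 : |gfun x v| * ‖v‖ ^ 2 = |‖y‖ ^ 2 - ‖x‖ ^ 2| := by
    rw [hgq, abs_mul, abs_of_nonneg (by positivity : (0:ℝ) ≤ ‖v‖ ^ 2)]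
  have h3 : ‖v‖ * ‖y - x‖ = |‖y‖ ^ 2 - ‖x‖ ^ 2| := by
    rw [← h2, ← h1]; ring
  have h4 : |‖y‖ ^ 2 - ‖x‖ ^ 2| ≤ ‖y - x‖ * (‖y‖ + ‖x‖) := by
    have hfac : ‖y‖ ^ 2 - ‖x‖ ^ 2 = (‖y‖ - ‖x‖) * (‖y‖ + ‖x‖) := by ring
    rw [hfac, abs_mul, abs_of_nonneg (by positivity : (0:ℝ) ≤ ‖y‖ + ‖x‖)]
    exact mul_le_mul_of_nonneg_right (abs_norm_sub_norm_le y x) (by positivity)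
  have h5 : ‖v‖ ≤ ‖y‖ + ‖x‖ := by
    have h6 : ‖v‖ * ‖y - x‖ ≤ (‖y‖ + ‖x‖) * ‖y - x‖ := by
      rw [h3]
      calc |‖y‖ ^ 2 - ‖x‖ ^ 2| ≤ ‖y - x‖ * (‖y‖ + ‖x‖) := h4
      _ = (‖y‖ + ‖x‖) * ‖y - x‖ := by ring
    exact le_of_mul_le_mul_right h6 hyx
  linarith

lemma mem_sphere_of_fixed {d : ℕ} {x v : Euc d} (hv : v ≠ 0) (hfix : reflPt v x = x) :
    ‖v - x‖ = ‖x‖ := by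
  have hg : gfun x v = 0 := by
    have h0 : gfun x v • v = 0 := by rw [← reflPt_sub, hfix, sub_self]
    rcases smul_eq_zero.mp h0 with h | h
    · exact h
    · exact absurd h hv
  have hQ : ‖v‖ ^ 2 ≠ 0 := pow_ne_zero _ (norm_ne_zero_iff.mpr hv)
  have hP : 2 * ⟪x, v⟫ = ‖v‖ ^ 2 := by
    have h' := hg
    rw [gfun, sub_eq_zero] at h'
    exact (div_eq_one_iff_eq hQ).mp h'.symm
  have hsq : ‖v - x‖ ^ 2 = ‖x‖ ^ 2 := by
    rw [norm_sub_sq_real, real_inner_comm]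
    linarith [hP]
  exact (pow_left_inj₀ (norm_nonneg _) (norm_nonneg _) two_ne_zero).mp hsq

lemma lintegral_annulus_le {k : ℕ} {R : ℝ} (hR : 0 < R) (n : ℕ) :
    ∫⁻ v in {v : Euc (k+1) | R/2^(n+1) ≤ ‖v‖ ∧ ‖v‖ < R/2^n}, ENNReal.ofReal ((‖v‖ ^ k)⁻¹)
      ≤ ENNReal.ofReal ((2:ℝ)^k * R * (2⁻¹)^n) * volume (ball (0 : Euc (k+1)) 1) := by
  have hr1 : (0:ℝ) < R/2^(n+1) := by positivity
  calc ∫⁻ v in {v : Euc (k+1) | R/2^(n+1) ≤ ‖v‖ ∧ ‖v‖ < R/2^n}, ENNReal.ofReal ((‖v‖ ^ k)⁻¹)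
      ≤ ∫⁻ _ in {v : Euc (k+1) | R/2^(n+1) ≤ ‖v‖ ∧ ‖v‖ < R/2^n},
        ENNReal.ofReal (((R/2^(n+1)) ^ k)⁻¹) := by
        apply setLIntegral_mono measurable_const
        intro v hv
        apply ENNReal.ofReal_le_ofReal
        apply inv_anti₀ (by positivity)
        exact pow_le_pow_left₀ hr1.le hv.1 k
    _ = ENNReal.ofReal (((R/2^(n+1)) ^ k)⁻¹) *
        volume {v : Euc (k+1) | R/2^(n+1) ≤ ‖v‖ ∧ ‖v‖ < R/2^n} := by
        rw [setLIntegral_const]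
    _ ≤ ENNReal.ofReal (((R/2^(n+1)) ^ k)⁻¹) * volume (ball (0 : Euc (k+1)) (R/2^n)) := by
        apply mul_le_mul_right
        apply measure_mono
        intro v hv
        simpa [mem_ball, dist_eq_norm] using hv.2
    _ = ENNReal.ofReal (((R/2^(n+1)) ^ k)⁻¹) * (ENNReal.ofReal ((R/2^n) ^ (k+1)) *
        volume (ball (0 : Euc (k+1)) 1)) := by
        rw [Measure.addHaar_ball volume 0 (by positivity : (0:ℝ) ≤ R/2^n),
          finrank_euclideanSpace_fin]
    _ = ENNReal.ofReal ((2:ℝ)^k * R * (2⁻¹)^n) * volume (ball (0 : Euc (k+1)) 1) := by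
        rw [← mul_assoc, ← ENNReal.ofReal_mul (by positivity)]
        congr 2
        rw [div_pow, div_pow, inv_pow, ← pow_mul, ← pow_mul]
        field_simp
        ring

lemma lintegral_ball_inv_norm_lt_top {d : ℕ} (hd : 1 ≤ d) {R : ℝ} (hR : 0 < R) :
    ∫⁻ v in ball (0 : Euc d) R, ENNReal.ofReal ((‖v‖ ^ (d-1))⁻¹) < ⊤ := by
  obtain ⟨k, rfl⟩ : ∃ k, d = k + 1 := ⟨d - 1, by omega⟩
  simp only [Nat.add_sub_cancel]
  set A : ℕ → Set (Euc (k+1)) := fun n => {v | R/2^(n+1) ≤ ‖v‖ ∧ ‖v‖ < R/2^n} with hA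
  have hcover : ball (0 : Euc (k+1)) R ⊆ {0} ∪ ⋃ n, A n := by
    intro v hv
    rcases eq_or_ne v 0 with rfl | hv0
    · exact Or.inl rfl
    · have hvn : (0:ℝ) < ‖v‖ := norm_pos_iff.mpr hv0
      have hvR : ‖v‖ < R := by simpa [mem_ball, dist_eq_norm] using hv
      have hex : ∃ n, R/2^(n+1) ≤ ‖v‖ := by
        obtain ⟨n, hn⟩ := pow_unbounded_of_one_lt (R/‖v‖) (one_lt_two (α := ℝ))
        refine ⟨n, ?_⟩
        rw [div_le_iff₀ (by positivity)]
        rw [div_lt_iff₀ hvn] at hn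
        calc R ≤ 2^n * ‖v‖ := hn.le
        _ ≤ 2^(n+1) * ‖v‖ := by
            apply mul_le_mul_of_nonneg_right _ hvn.le
            exact pow_le_pow_right₀ one_le_two (Nat.le_succ n)
        _ = ‖v‖ * 2^(n+1) := by ring
      refine Or.inr (mem_iUnion.mpr ⟨Nat.find hex, Nat.find_spec hex, ?_⟩)
      rcases Nat.eq_zero_or_pos (Nat.find hex) with h0 | hpos
      · rw [h0]; simpa using hvR
      · obtain ⟨m, hm⟩ : ∃ m, Nat.find hex = m + 1 := ⟨Nat.find hex - 1, by omega⟩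
        have := Nat.find_min hex (m := m) (by omega)
        rw [hm]
        exact lt_of_not_ge this
  have V1 : volume (ball (0 : Euc (k+1)) 1) < ⊤ := measure_ball_lt_top
  calc ∫⁻ v in ball (0 : Euc (k+1)) R, ENNReal.ofReal ((‖v‖ ^ k)⁻¹)
      ≤ ∫⁻ v in ({0} ∪ ⋃ n, A n : Set (Euc (k+1))), ENNReal.ofReal ((‖v‖ ^ k)⁻¹) :=
        lintegral_mono_set hcover
    _ ≤ (∫⁻ v in ({0} : Set (Euc (k+1))), ENNReal.ofReal ((‖v‖ ^ k)⁻¹)) +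
        ∫⁻ v in (⋃ n, A n), ENNReal.ofReal ((‖v‖ ^ k)⁻¹) := lintegral_union_le _ _ _
    _ ≤ 0 + ∑' n, ∫⁻ v in A n, ENNReal.ofReal ((‖v‖ ^ k)⁻¹) := by
        apply add_le_add
        · rw [setLIntegral_measure_zero _ _ (measure_singleton 0)]
        · exact lintegral_iUnion_le _ _
    _ ≤ 0 + ∑' n, ENNReal.ofReal ((2:ℝ)^k * R * (2⁻¹)^n) * volume (ball (0 : Euc (k+1)) 1) := by
        apply add_le_add le_rfl
        exact ENNReal.tsum_le_tsum fun n => lintegral_annulus_le hR n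
    _ = (ENNReal.ofReal ((2:ℝ)^k * R) * (1 - ENNReal.ofReal 2⁻¹)⁻¹) *
        volume (ball (0 : Euc (k+1)) 1) := by
        rw [zero_add, ENNReal.tsum_mul_right]
        congr 1
        rw [← ENNReal.tsum_geometric, ← ENNReal.tsum_mul_left]
        congr 1
        funext n
        rw [← ENNReal.ofReal_pow (by norm_num), ← ENNReal.ofReal_mul (by positivity)]
    _ < ⊤ := by
        have h1 : (1 - ENNReal.ofReal 2⁻¹)⁻¹ < ⊤ := by
          rw [ENNReal.inv_lt_top, tsub_pos_iff_lt]
          calc ENNReal.ofReal 2⁻¹ < ENNReal.ofReal 1 := by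
                rw [ENNReal.ofReal_lt_ofReal_iff] <;> norm_num
          _ = 1 := ENNReal.ofReal_one
        exact ENNReal.mul_lt_top (ENNReal.mul_lt_top ENNReal.ofReal_lt_top h1) V1

lemma lintegral_ball_shift {d k : ℕ} (x : Euc d) (R : ℝ) :
    ∫⁻ y in ball x R, ENNReal.ofReal ((‖x - y‖ ^ k)⁻¹)
      = ∫⁻ z in ball (0 : Euc d) R, ENNReal.ofReal ((‖z‖ ^ k)⁻¹) := by
  have hmp : MeasurePreserving (fun z : Euc d => x - z) volume volume :=
    Measure.measurePreserving_sub_left volume x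
  have hemb : MeasurableEmbedding (fun z : Euc d => x - z) :=
    (Homeomorph.subLeft x).measurableEmbedding
  have hpre : (fun z : Euc d => x - z) ⁻¹' (ball x R) = ball 0 R := by
    ext z
    simp [mem_ball, dist_eq_norm]
  have := hmp.setLIntegral_comp_preimage_emb hemb
    (fun y => ENNReal.ofReal ((‖x - y‖ ^ k)⁻¹)) (ball x R)
  rw [hpre] at this
  rw [← this]
  apply setLIntegral_congr_fun measurableSet_ball
  intro z _
  simp

end Stmt3Aux

/-- For every x ∈ B_L and measurable E ⊆ B_L,
ν_L({σ : σ(x) ∈ E}) = (2Lω_d)⁻¹·∫_E |x − y|^{−(d−1)} dy. -/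
theorem stmt_3 {d : ℕ} (hd : 1 ≤ d) {L : ℝ} (hL : 0 < L) (x : Euc d)
    (hx : x ∈ ball (0 : Euc d) L) (E : Set (Euc d)) (hE : MeasurableSet E)
    (hEL : E ⊆ ball (0 : Euc d) L) :
    reflMeasure d L {v | reflPt v x ∈ E} =
      ENNReal.ofReal ((2 * L * omegaD d)⁻¹ * ∫ y in E, (‖x - y‖ ^ (d - 1))⁻¹) := by
  obtain ⟨k, rfl⟩ : ∃ k, d = k + 1 := ⟨d - 1, by omega⟩
  have hxL : ‖x‖ < L := by simpa [mem_ball, dist_eq_norm] using hx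
  set c : ℝ := (2 * L * omegaD (k+1))⁻¹ with hc
  have hc0 : (0:ℝ) ≤ c := by
    rw [hc]
    apply inv_nonneg.mpr
    apply mul_nonneg (by linarith)
    rw [omegaD]
    positivity
  -- measurability of v ↦ reflPt v x
  have h1m : Measurable fun v : Euc (k+1) => (⟪x, v⟫ : ℝ) :=
    (continuous_const.inner continuous_id).measurable
  have h2m : Measurable fun v : Euc (k+1) => (⟪v, v⟫ : ℝ) :=
    (continuous_id.inner continuous_id).measurable
  have hsc : Measurable fun v : Euc (k+1) => (1 - 2 * ⟪x, v⟫ / ⟪v, v⟫ : ℝ) :=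
    measurable_const.sub ((measurable_const.mul h1m).div h2m)
  have hΦm : Measurable (fun v : Euc (k+1) => reflPt v x) := by
    simp only [reflPt]
    exact measurable_const.add (hsc.smul measurable_id)
  have hSmeas : MeasurableSet {v : Euc (k+1) | reflPt v x ∈ E} := hΦm hE
  set s : Set (Euc (k+1)) := {v | v ≠ 0 ∧ reflPt v x ∈ E ∧ reflPt v x ≠ x} with hsdef
  have hsm : MeasurableSet s := by
    have hrw : s = ({0}ᶜ ∩ ((fun v => reflPt v x) ⁻¹' E ∩
        ((fun v => reflPt v x) ⁻¹' {x})ᶜ)) := by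
      ext v
      simp [hsdef]
    rw [hrw]
    exact (measurableSet_singleton 0).compl.inter
      ((hΦm hE).inter (hΦm (measurableSet_singleton x)).compl)
  have key1 : reflMeasure (k+1) L {v | reflPt v x ∈ E}
      = ∫⁻ v in {v | reflPt v x ∈ E} ∩ (ball 0 (2*L) \ {0}),
          ENNReal.ofReal (c * (‖v‖ ^ (k+1-1))⁻¹) := by
    rw [reflMeasure, withDensity_apply _ hSmeas, Measure.restrict_restrict hSmeas]
  -- ae equality of sets
  have hsub1 : s ⊆ {v | reflPt v x ∈ E} ∩ (ball 0 (2*L) \ {0}) := by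
    rintro v ⟨hv0, hvE, hvne⟩
    refine ⟨hvE, ⟨?_, hv0⟩⟩
    have hyL : ‖reflPt v x‖ < L := by
      simpa [mem_ball, dist_eq_norm] using hEL hvE
    have := norm_lt_two_mul hxL hv0 hvne hyL
    simpa [mem_ball, dist_eq_norm] using this
  have hsub2 : ({v | reflPt v x ∈ E} ∩ (ball 0 (2*L) \ {0})) \ s ⊆ sphere x ‖x‖ := by
    rintro v ⟨⟨hvE, hball, hv0'⟩, hns⟩
    have hv0 : v ≠ 0 := hv0'
    have hfix : reflPt v x = x := by
      by_contra hne
      exact hns ⟨hv0, hvE, hne⟩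
    have := mem_sphere_of_fixed hv0 hfix
    simpa [mem_sphere_iff_norm] using this
  have hae : ({v | reflPt v x ∈ E} ∩ (ball 0 (2*L) \ {0}) : Set (Euc (k+1)))
      =ᵐ[volume] s := by
    rw [ae_eq_set]
    constructor
    · exact measure_mono_null hsub2 (Measure.addHaar_sphere volume x ‖x‖)
    · have : s \ ({v | reflPt v x ∈ E} ∩ (ball 0 (2*L) \ {0})) = ∅ :=
        diff_eq_empty.mpr hsub1
      rw [this]; exact measure_empty
  -- change of variables
  have hder : ∀ v ∈ s, HasFDerivWithinAt (fun w => reflPt w x) (Dmap x v) s v :=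
    fun v hv => (hasFDerivAt_refl x hv.1).hasFDerivWithinAt
  have hinj : Set.InjOn (fun v => reflPt v x) s :=
    (injOn_refl x).mono (fun v hv => show v ≠ 0 ∧ reflPt v x ≠ x from ⟨hv.1, hv.2.2⟩)
  have hcov := lintegral_image_eq_lintegral_abs_det_fderiv_mul volume hsm hder hinj
    (fun y => ENNReal.ofReal (c * (‖x - y‖ ^ (k+1-1))⁻¹))
  -- integrand equality on s
  have hint : ∫⁻ v in s, ENNReal.ofReal |(Dmap x v).det| *
      ENNReal.ofReal (c * (‖x - reflPt v x‖ ^ (k+1-1))⁻¹)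
      = ∫⁻ v in s, ENNReal.ofReal (c * (‖v‖ ^ (k+1-1))⁻¹) := by
    apply setLIntegral_congr_fun hsm
    intro v hv
    obtain ⟨hv0, hvE, hvne⟩ := hv
    have hg := gfun_ne_zero hv0 hvne
    have hdet := det_Dmap (by omega : 1 ≤ k + 1) x hv0 hg
    have hnorm : ‖x - reflPt v x‖ = |gfun x v| * ‖v‖ := by
      rw [norm_sub_rev, reflPt_sub, norm_smul, Real.norm_eq_abs]
    dsimp only
    rw [hdet, hnorm, abs_pow, ← ENNReal.ofReal_mul (by positivity)]
    congr 1
    simp only [Nat.add_sub_cancel]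
    rw [mul_pow]
    have h1 : |gfun x v| ^ k ≠ 0 := pow_ne_zero _ (abs_ne_zero.mpr hg)
    calc |gfun x v| ^ k * (c * (|gfun x v| ^ k * ‖v‖ ^ k)⁻¹)
        = c * (|gfun x v| ^ k * (|gfun x v| ^ k)⁻¹) * (‖v‖ ^ k)⁻¹ := by
          rw [mul_inv]; ring
      _ = c * (‖v‖ ^ k)⁻¹ := by rw [mul_inv_cancel₀ h1, mul_one]
  -- image
  have himg : (fun v => reflPt v x) '' s = {y | y ∈ E ∧ y ≠ x ∧ ‖y‖ ≠ ‖x‖} := by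
    ext y
    constructor
    · rintro ⟨v, ⟨hv0, hvE, hvne⟩, rfl⟩
      exact ⟨hvE, hvne, norm_reflPt_ne hv0 hvne⟩
    · rintro ⟨hyE, hyx, hyn⟩
      obtain ⟨v, hv0, hveq⟩ := exists_refl_eq x hyx hyn
      exact ⟨v, ⟨hv0, by rw [hveq]; exact hyE, by rw [hveq]; exact hyx⟩, hveq⟩
  have haeE : ({y | y ∈ E ∧ y ≠ x ∧ ‖y‖ ≠ ‖x‖} : Set (Euc (k+1))) =ᵐ[volume] E := by
    rw [ae_eq_set]
    constructor
    · have : ({y | y ∈ E ∧ y ≠ x ∧ ‖y‖ ≠ ‖x‖} : Set (Euc (k+1))) \ E = ∅ :=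
        diff_eq_empty.mpr (fun y hy => hy.1)
      rw [this]; exact measure_empty
    · apply measure_mono_null (t := ({x} ∪ sphere (0 : Euc (k+1)) ‖x‖ : Set (Euc (k+1))))
      · rintro y ⟨hyE, hyn⟩
        simp only [mem_setOf_eq, not_and, not_not] at hyn
        by_cases hyx : y = x
        · exact Or.inl hyx
        · rcases ne_or_eq ‖y‖ ‖x‖ with h | h
          · exact absurd h (by simpa using hyn hyE hyx)
          · right
            simpa [mem_sphere_iff_norm, sub_zero] using h
      · apply measure_union_null (measure_singleton x)
        exact Measure.addHaar_sphere volume 0 ‖x‖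
  -- integrability
  have hball2 : E ⊆ ball x (2*L) := by
    intro y hy
    have h1 : ‖y‖ < L := by simpa [mem_ball, dist_eq_norm] using hEL hy
    have h2 : dist y x < 2*L := by
      calc dist y x ≤ ‖y‖ + ‖x‖ := by
            rw [dist_eq_norm]; exact norm_sub_le y x
      _ < 2*L := by linarith
    exact h2
  have hfin : ∫⁻ y in E, ENNReal.ofReal ((‖x - y‖ ^ (k+1-1))⁻¹) < ⊤ := by
    calc ∫⁻ y in E, ENNReal.ofReal ((‖x - y‖ ^ (k+1-1))⁻¹)
        ≤ ∫⁻ y in ball x (2*L), ENNReal.ofReal ((‖x - y‖ ^ (k+1-1))⁻¹) :=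
          lintegral_mono_set hball2
      _ = ∫⁻ z in ball (0 : Euc (k+1)) (2*L), ENNReal.ofReal ((‖z‖ ^ (k+1-1))⁻¹) :=
          lintegral_ball_shift x (2*L)
      _ < ⊤ := lintegral_ball_inv_norm_lt_top (by omega) (by linarith)
  have hintg : IntegrableOn (fun y => (‖x - y‖ ^ (k+1-1))⁻¹) E volume := by
    constructor
    · exact (((measurable_const.sub measurable_id).norm.pow_const _).inv).aestronglyMeasurable
    · rw [hasFiniteIntegral_iff_ofReal]
      · exact hfin
      · filter_upwards with y
        positivity
  have hconv : ∫⁻ y in E, ENNReal.ofReal (c * (‖x - y‖ ^ (k+1-1))⁻¹)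
      = ENNReal.ofReal (c * ∫ y in E, (‖x - y‖ ^ (k+1-1))⁻¹) := by
    rw [← integral_const_mul]
    exact (ofReal_integral_eq_lintegral_ofReal (hintg.const_mul c)
      (Filter.Eventually.of_forall fun y => by positivity)).symm
  calc reflMeasure (k+1) L {v | reflPt v x ∈ E}
      = ∫⁻ v in {v | reflPt v x ∈ E} ∩ (ball 0 (2*L) \ {0}),
          ENNReal.ofReal (c * (‖v‖ ^ (k+1-1))⁻¹) := key1
    _ = ∫⁻ v in s, ENNReal.ofReal (c * (‖v‖ ^ (k+1-1))⁻¹) := setLIntegral_congr hae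
    _ = ∫⁻ v in s, ENNReal.ofReal |(Dmap x v).det| *
          ENNReal.ofReal (c * (‖x - reflPt v x‖ ^ (k+1-1))⁻¹) := hint.symm
    _ = ∫⁻ y in (fun v => reflPt v x) '' s,
          ENNReal.ofReal (c * (‖x - y‖ ^ (k+1-1))⁻¹) := hcov.symm
    _ = ∫⁻ y in ({y | y ∈ E ∧ y ≠ x ∧ ‖y‖ ≠ ‖x‖} : Set (Euc (k+1))),
          ENNReal.ofReal (c * (‖x - y‖ ^ (k+1-1))⁻¹) := by rw [himg]
    _ = ∫⁻ y in E, ENNReal.ofReal (c * (‖x - y‖ ^ (k+1-1))⁻¹) := setLIntegral_congr haeE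
    _ = ENNReal.ofReal (c * ∫ y in E, (‖x - y‖ ^ (k+1-1))⁻¹) := hconv


end
end

section
/- Let d ≥ 1, let σ be a reflection of ℝ^d across an affine hyperplane H not containing the origin, let c ∈ ℝ^d and r > 0. If c lies in the closed half-space bounded by H that contains the origin, then (c + B_r)^σ = c + B_r; otherwise (c + B_r)^σ = σ(c) + B_r. In both cases the polarized set is an open ball of radius r whose center is the point of {c, σ(c)} lying in the closed half-space containing the origin, and the distance of this center from the origin equals min(|c|, |σ(c)|). -/
open MeasureTheory Metric Set Filter
open scoped RealInnerProductSpace Classical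

noncomputable section

lemma inner_self_pos' {d : ℕ} {v : Euc d} (hv : v ≠ 0) : 0 < ⟪v, v⟫ :=
  lt_of_le_of_ne real_inner_self_nonneg (Ne.symm (inner_self_ne_zero.mpr hv))

lemma refl_inner {d : ℕ} (v : Euc d) (hv : v ≠ 0) (y : Euc d) :
    ⟪reflPt v y, v⟫ = ⟪v, v⟫ - ⟪y, v⟫ := by
  have hvv : ⟪v, v⟫ ≠ 0 := ne_of_gt (inner_self_pos' hv)
  simp only [reflPt, inner_add_left, real_inner_smul_left]
  set N := ⟪v, v⟫ with hN
  set b := ⟪y, v⟫ with hb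
  field_simp
  ring

lemma refl_invol {d : ℕ} (v : Euc d) (hv : v ≠ 0) (y : Euc d) :
    reflPt v (reflPt v y) = y := by
  have hvv : ⟪v, v⟫ ≠ 0 := ne_of_gt (inner_self_pos' hv)
  simp only [reflPt, inner_add_left, real_inner_smul_left]
  rw [add_assoc, ← add_smul]
  convert add_zero y
  convert zero_smul ℝ v
  set N := ⟪v, v⟫ with hN
  set b := ⟪y, v⟫ with hb
  field_simp
  ring

lemma key {d : ℕ} (v : Euc d) (hv : v ≠ 0) (y c : Euc d) :
    ‖y - reflPt v c‖ ^ 2 = ‖y - c‖ ^ 2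
      + (2 * ⟪c, v⟫ - ⟪v, v⟫) * (2 * ⟪y, v⟫ - ⟪v, v⟫) / ⟪v, v⟫ := by
  have hvv : ⟪v, v⟫ ≠ 0 := ne_of_gt (inner_self_pos' hv)
  simp only [← real_inner_self_eq_norm_sq, reflPt, inner_sub_left, inner_sub_right,
    inner_add_left, inner_add_right, real_inner_smul_left, real_inner_smul_right]
  rw [real_inner_comm v c, real_inner_comm v y, real_inner_comm c y]
  set N := ⟪v, v⟫ with hN
  set a := ⟪c, v⟫ with ha
  set b := ⟪y, v⟫ with hb
  set p := ⟪y, c⟫ with hp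
  field_simp
  ring

lemma key_symm {d : ℕ} (v : Euc d) (hv : v ≠ 0) (y c : Euc d) :
    ‖reflPt v y - c‖ = ‖y - reflPt v c‖ := by
  have h1 : ‖reflPt v y - c‖ ^ 2 = ‖y - reflPt v c‖ ^ 2 := by
    rw [norm_sub_rev, key v hv c y, key v hv y c, norm_sub_rev c y]
    ring
  have := congrArg Real.sqrt h1
  simpa [Real.sqrt_sq, norm_nonneg] using this

lemma refl_isometry {d : ℕ} (v : Euc d) (hv : v ≠ 0) (y c : Euc d) :
    ‖reflPt v y - reflPt v c‖ = ‖y - c‖ := by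
  rw [key_symm v hv, refl_invol v hv]

lemma refl_norm_sq {d : ℕ} (v : Euc d) (hv : v ≠ 0) (c : Euc d) :
    ‖reflPt v c‖ ^ 2 = ‖c‖ ^ 2 + (⟪v, v⟫ - 2 * ⟪c, v⟫) := by
  have h := key v hv 0 c
  have hvv : ⟪v, v⟫ ≠ 0 := ne_of_gt (inner_self_pos' hv)
  simp only [zero_sub, norm_neg, inner_zero_left] at h
  rw [h]
  set N := ⟪v, v⟫ with hN
  set a := ⟪c, v⟫ with ha
  field_simp
  ring

lemma polarizeSet_ball_of_le {d : ℕ} (v : Euc d) (hv : v ≠ 0) (c : Euc d) (r : ℝ)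
    (hc : ⟪c, v⟫ ≤ ‖v‖ ^ 2 / 2) : polarizeSet v (ball c r) = ball c r := by
  have hN : 0 < ⟪v, v⟫ := inner_self_pos' hv
  have hNn : ⟪v, v⟫ = ‖v‖ ^ 2 := real_inner_self_eq_norm_sq v
  ext y
  simp only [polarizeSet, mem_setOf_eq, mem_ball, dist_eq_norm]
  split_ifs with hy
  · constructor
    · rintro (h | h)
      · exact h
      · have h2 : ‖reflPt v y - c‖ = ‖y - reflPt v c‖ := key_symm v hv y c
        have h3 := key v hv y c
        have hr0 : 0 < r := lt_of_le_of_lt (norm_nonneg _) h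
        have h4 : ‖y - reflPt v c‖ ^ 2 < r ^ 2 := by
          rw [← h2]
          have := norm_nonneg (reflPt v y - c)
          nlinarith
        have hterm : 0 ≤ (2 * ⟪c, v⟫ - ⟪v, v⟫) * (2 * ⟪y, v⟫ - ⟪v, v⟫) / ⟪v, v⟫ := by
          apply div_nonneg _ (le_of_lt hN)
          have h5 : 2 * ⟪c, v⟫ - ⟪v, v⟫ ≤ 0 := by rw [hNn]; linarith
          have h6 : 2 * ⟪y, v⟫ - ⟪v, v⟫ ≤ 0 := by rw [hNn]; linarith
          nlinarith
        refine lt_of_pow_lt_pow_left₀ 2 hr0.le ?_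
        nlinarith
    · exact Or.inl
  · push_neg at hy
    constructor
    · exact And.left
    · intro h
      refine ⟨h, ?_⟩
      have h2 : ‖reflPt v y - c‖ = ‖y - reflPt v c‖ := key_symm v hv y c
      have h3 := key v hv y c
      have hterm : (2 * ⟪c, v⟫ - ⟪v, v⟫) * (2 * ⟪y, v⟫ - ⟪v, v⟫) / ⟪v, v⟫ ≤ 0 := by
        apply div_nonpos_of_nonpos_of_nonneg _ (le_of_lt hN)
        have h5 : 2 * ⟪c, v⟫ - ⟪v, v⟫ ≤ 0 := by rw [hNn]; linarith
        have h6 : 0 ≤ 2 * ⟪y, v⟫ - ⟪v, v⟫ := by rw [hNn]; linarith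
        exact mul_nonpos_of_nonpos_of_nonneg h5 h6
      rw [h2]
      have hr0 : 0 < r := lt_of_le_of_lt (norm_nonneg _) h
      have := norm_nonneg (y - c)
      refine lt_of_pow_lt_pow_left₀ 2 hr0.le ?_
      nlinarith

lemma polarizeSet_ball_swap {d : ℕ} (v : Euc d) (hv : v ≠ 0) (c : Euc d) (r : ℝ) :
    polarizeSet v (ball c r) = polarizeSet v (ball (reflPt v c) r) := by
  ext y
  simp only [polarizeSet, mem_setOf_eq, mem_ball, dist_eq_norm]
  have e1 : ‖reflPt v y - reflPt v c‖ = ‖y - c‖ := refl_isometry v hv y c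
  have e2 : ‖reflPt v y - c‖ = ‖y - reflPt v c‖ := key_symm v hv y c
  rw [← e1, e2]
  split_ifs with hy
  · exact or_comm
  · exact and_comm


/-- Polarization of a ball: if the center c lies in the closed half-space containing the
origin then (c + B_r)^σ = c + B_r, otherwise (c + B_r)^σ = σ(c) + B_r; in both cases the
polarized set is the ball of radius r around `polarizeCenter v c`, which lies in the closed
half-space containing the origin and has distance min(|c|, |σ(c)|) from the origin. -/
theorem stmt_8 {d : ℕ} (hd : 1 ≤ d) (v : Euc d) (hv : v ≠ 0) (c : Euc d) (r : ℝ) (hr : 0 < r) :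
    ((⟪c, v⟫ ≤ ‖v‖ ^ 2 / 2 → polarizeSet v (ball c r) = ball c r) ∧
      (¬ ⟪c, v⟫ ≤ ‖v‖ ^ 2 / 2 → polarizeSet v (ball c r) = ball (reflPt v c) r)) ∧
    polarizeSet v (ball c r) = ball (polarizeCenter v c) r ∧
    ⟪polarizeCenter v c, v⟫ ≤ ‖v‖ ^ 2 / 2 ∧
    ‖polarizeCenter v c‖ = min ‖c‖ ‖reflPt v c‖ := by
  have hNn : ⟪v, v⟫ = ‖v‖ ^ 2 := real_inner_self_eq_norm_sq v
  have hcase2 : ¬ ⟪c, v⟫ ≤ ‖v‖ ^ 2 / 2 →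
      polarizeSet v (ball c r) = ball (reflPt v c) r := by
    intro hc
    push_neg at hc
    have hσ : ⟪reflPt v c, v⟫ ≤ ‖v‖ ^ 2 / 2 := by
      rw [refl_inner v hv c, hNn]; linarith
    rw [polarizeSet_ball_swap v hv c r]
    exact polarizeSet_ball_of_le v hv _ r hσ
  refine ⟨⟨fun hc => polarizeSet_ball_of_le v hv c r hc, hcase2⟩, ?_, ?_, ?_⟩
  · by_cases hc : ⟪c, v⟫ ≤ ‖v‖ ^ 2 / 2
    · rw [polarizeCenter, if_pos hc]; exact polarizeSet_ball_of_le v hv c r hc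
    · rw [polarizeCenter, if_neg hc]; exact hcase2 hc
  · by_cases hc : ⟪c, v⟫ ≤ ‖v‖ ^ 2 / 2
    · rw [polarizeCenter, if_pos hc]; exact hc
    · rw [polarizeCenter, if_neg hc, refl_inner v hv c, hNn]
      push_neg at hc; linarith
  · by_cases hc : ⟪c, v⟫ ≤ ‖v‖ ^ 2 / 2
    · rw [polarizeCenter, if_pos hc]
      have hsq : ‖c‖ ^ 2 ≤ ‖reflPt v c‖ ^ 2 := by
        rw [refl_norm_sq v hv c, hNn]; linarith
      have hle : ‖c‖ ≤ ‖reflPt v c‖ := by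
        have h2 := Real.sqrt_le_sqrt hsq
        simpa [Real.sqrt_sq (norm_nonneg _)] using h2
      exact (min_eq_left hle).symm
    · rw [polarizeCenter, if_neg hc]
      push_neg at hc
      have hsq : ‖reflPt v c‖ ^ 2 ≤ ‖c‖ ^ 2 := by
        rw [refl_norm_sq v hv c, hNn]; linarith
      have hle : ‖reflPt v c‖ ≤ ‖c‖ := by
        have h2 := Real.sqrt_le_sqrt hsq
        simpa [Real.sqrt_sq (norm_nonneg _)] using h2
      exact (min_eq_right hle).symm


end
end

section
/- Let d ≥ 1 and L > 0. For every c ∈ ℝ^d with 0 < |c| < L and every β with 0 < β < |c|, ν_L({σ : min(|c|, |σ(c)|) ≤ β}) = (2Lω_d)^{−1}·∫_{|y| ≤ β} |c − y|^{−(d−1)} dy. -/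
open MeasureTheory Metric Set Filter
open scoped RealInnerProductSpace Classical

noncomputable section

namespace Stmt9

variable {d : ℕ}

/-- rank-one-plus-scalar determinant -/
lemma det_aux (hd : 1 ≤ d) (a b : Euc d) (x : ℝ) (hx : x ≠ 0) :
    (((innerSL ℝ b).smulRight a + x • ContinuousLinearMap.id ℝ (Euc d)) :
      Euc d →L[ℝ] Euc d).det = x ^ (d - 1) * (x + ⟪b, a⟫) := by
  classical
  have hB := (EuclideanSpace.basisFun (Fin d) ℝ).toBasis
  rw [ContinuousLinearMap.det]
  rw [show (((innerSL ℝ b).smulRight a + x • ContinuousLinearMap.id ℝ (Euc d)) :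
        Euc d →L[ℝ] Euc d).toLinearMap =
      (((innerSL ℝ b).smulRight a : Euc d →L[ℝ] Euc d) :
        Euc d →ₗ[ℝ] Euc d) + x • (ContinuousLinearMap.id ℝ (Euc d) :
        Euc d →ₗ[ℝ] Euc d) from rfl]
  rw [← LinearMap.det_toMatrix (EuclideanSpace.basisFun (Fin d) ℝ).toBasis]
  have hM : LinearMap.toMatrix (EuclideanSpace.basisFun (Fin d) ℝ).toBasis
      (EuclideanSpace.basisFun (Fin d) ℝ).toBasis
      ((((innerSL ℝ b).smulRight a : Euc d →L[ℝ] Euc d) :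
        Euc d →ₗ[ℝ] Euc d) + x • (ContinuousLinearMap.id ℝ (Euc d) : Euc d →ₗ[ℝ] Euc d)) =
      x • (1 + Matrix.replicateCol (Fin 1) (x⁻¹ • (WithLp.equiv 2 (Fin d → ℝ) a)) *
        Matrix.replicateRow (Fin 1) (WithLp.equiv 2 (Fin d → ℝ) b)) := by
    ext i j
    simp [LinearMap.toMatrix_apply, Matrix.mul_apply, Matrix.one_apply,
      EuclideanSpace.basisFun_apply, PiLp.inner_apply, EuclideanSpace.single_apply,
      mul_comm, Matrix.smul_apply, Matrix.add_apply]
    split <;> field_simp <;> ring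
  rw [hM, Matrix.det_smul]
  erw [Matrix.det_one_add_replicateCol_mul_replicateRow]
  rw [Fintype.card_fin]
  have : dotProduct (WithLp.equiv 2 (Fin d → ℝ) b) (x⁻¹ • (WithLp.equiv 2 (Fin d → ℝ) a)) = x⁻¹ * ⟪b, a⟫ := by
    simp [dotProduct, PiLp.inner_apply, Finset.mul_sum]
    exact Finset.sum_congr rfl fun i _ => by ring
  rw [this]
  have hd' : x ^ d = x ^ (d - 1) * x := by
    rw [← pow_succ]
    congr 1
    omega
  field_simp [hd']
  rw [hd']; ring

def Phi (c y : Euc d) : Euc d := ((‖c‖ ^ 2 - ‖y‖ ^ 2) / ‖c - y‖ ^ 2) • (c - y)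

def gfun (c y : Euc d) : ℝ := (‖c‖ ^ 2 - ‖y‖ ^ 2) / ‖c - y‖ ^ 2

def wvec (c y : Euc d) : Euc d :=
  (‖c - y‖ ^ 2)⁻¹ • ((-2 : ℝ) • y + (2 * gfun c y) • (c - y))

def Phi' (c y : Euc d) : Euc d →L[ℝ] Euc d :=
  (innerSL ℝ (wvec c y)).smulRight (c - y) + (-(gfun c y)) • ContinuousLinearMap.id ℝ (Euc d)

lemma hasFDerivAt_Phi (c y : Euc d) (hne : y ≠ c) :
    HasFDerivAt (Phi c) (Phi' c y) y := by
  have hsub : HasFDerivAt (fun y : Euc d => c - y) (-(ContinuousLinearMap.id ℝ (Euc d))) y := by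
    have := (hasFDerivAt_const (𝕜 := ℝ) c y).sub (hasFDerivAt_id (𝕜 := ℝ) y)
    rw [zero_sub] at this; exact this
  have hsub' : HasFDerivAt (fun y : Euc d => c - y) (-(ContinuousLinearMap.id ℝ (Euc d))) y := hsub
  have hD := hsub'.norm_sq
  have hid : HasFDerivAt (fun y : Euc d => y) (ContinuousLinearMap.id ℝ (Euc d)) y := hasFDerivAt_id y
  have hN := (hasFDerivAt_const (𝕜 := ℝ) (‖c‖ ^ 2) y).sub hid.norm_sq
  have hcy : c - y ≠ 0 := sub_ne_zero.2 (Ne.symm hne)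
  have hDne : ‖c - y‖ ^ 2 ≠ 0 := pow_ne_zero _ (norm_ne_zero_iff.2 hcy)
  have hDinv := (hasDerivAt_inv hDne).comp_hasFDerivAt y hD
  have h := (hN.mul hDinv).smul hsub
  have heq : Phi c = fun y : Euc d =>
      ((‖c‖ ^ 2 - ‖y‖ ^ 2) * ((fun y : Euc d => ‖c - y‖ ^ 2) y)⁻¹) • (c - y) := by
    funext z; simp [Phi, div_eq_mul_inv]
  rw [heq]
  refine h.congr_fderiv ?_
  ext1 h'
  simp only [Phi', wvec, gfun, ContinuousLinearMap.add_apply, ContinuousLinearMap.smul_apply,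
    ContinuousLinearMap.smulRight_apply, ContinuousLinearMap.coe_smul', Pi.smul_apply,
    ContinuousLinearMap.comp_apply, ContinuousLinearMap.neg_apply, ContinuousLinearMap.id_apply,
    ContinuousLinearMap.coe_sub', Pi.sub_apply, ContinuousLinearMap.zero_apply, innerSL_apply_apply,
    smul_eq_mul, Pi.mul_apply, Function.comp_apply, inner_neg_right]
  rw [real_inner_smul_left, inner_add_left, real_inner_smul_left, real_inner_smul_left]
  match_scalars <;> field_simp <;> ring

lemma det_Phi' (hd : 1 ≤ d) (c y : Euc d) (hne : y ≠ c) (hg : gfun c y ≠ 0) :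
    (Phi' c y).det = (-(gfun c y)) ^ (d - 1) := by
  have hcy : c - y ≠ 0 := sub_ne_zero.2 (Ne.symm hne)
  have hDne : ‖c - y‖ ^ 2 ≠ 0 := pow_ne_zero _ (norm_ne_zero_iff.2 hcy)
  rw [Phi', det_aux hd _ _ _ (neg_ne_zero.2 hg)]
  have hiy : 2 * ⟪y, c - y⟫ = (‖c‖ ^ 2 - ‖y‖ ^ 2) - ‖c - y‖ ^ 2 := by
    have h1 := @norm_sub_sq_real (Euc d) _ _ c y
    have h3 : ⟪y, c - y⟫ = ⟪y, c⟫ - ‖y‖ ^ 2 := by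
      rw [inner_sub_right, real_inner_self_eq_norm_sq]
    have h4 : ⟪c, y⟫ = ⟪y, c⟫ := real_inner_comm y c
    rw [h3]; rw [h4] at h1; linarith
  have hw : ⟪wvec c y, c - y⟫ = gfun c y + 1 := by
    rw [wvec, real_inner_smul_left, inner_add_left, real_inner_smul_left,
      real_inner_smul_left, real_inner_self_eq_norm_sq,
      show ⟪y, c - y⟫ = ((‖c‖ ^ 2 - ‖y‖ ^ 2) - ‖c - y‖ ^ 2) / 2 by linarith]
    simp only [gfun]
    field_simp
    ring
  rw [hw]
  ring_nf


lemma reflPt_Phi (c y : Euc d) (hy : ‖y‖ < ‖c‖) : reflPt (Phi c y) c = y := by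
  have hN : 0 < ‖c‖ ^ 2 - ‖y‖ ^ 2 := by nlinarith [norm_nonneg y, norm_nonneg c]
  have hne : y ≠ c := fun h => by rw [h] at hy; exact lt_irrefl _ hy
  have hcy : c - y ≠ 0 := sub_ne_zero.2 (Ne.symm hne)
  have hD : 0 < ‖c - y‖ ^ 2 := by
    have := norm_pos_iff.2 hcy
    positivity
  have h2 : 2 * ⟪c, c - y⟫ = (‖c‖ ^ 2 - ‖y‖ ^ 2) + ‖c - y‖ ^ 2 := by
    have h1 := @norm_sub_sq_real (Euc d) _ _ c y
    rw [inner_sub_right, real_inner_self_eq_norm_sq]; linarith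
  rw [reflPt, Phi, real_inner_smul_right, real_inner_smul_right, real_inner_smul_left,
    real_inner_self_eq_norm_sq,
    show ⟪c, c - y⟫ = ((‖c‖ ^ 2 - ‖y‖ ^ 2) + ‖c - y‖ ^ 2) / 2 from by linarith,
    smul_smul]
  match_scalars <;> field_simp <;> ring

lemma Phi_reflPt (c v : Euc d) (hv : v ≠ 0) (h : ‖reflPt v c‖ < ‖c‖) :
    Phi c (reflPt v c) = v := by
  have hQ0 : (0:ℝ) < ‖v‖ ^ 2 := by
    have := norm_pos_iff.2 hv
    positivity
  set t := 1 - 2 * ⟪c, v⟫ / ⟪v, v⟫ with ht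
  have hyd : reflPt v c = c + t • v := rfl
  have hvv : ⟪v, v⟫ = ‖v‖ ^ 2 := real_inner_self_eq_norm_sq v
  have hcv : 2 * ⟪c, v⟫ = (1 - t) * ‖v‖ ^ 2 := by
    rw [ht]; field_simp [hvv]; rw [hvv]; ring
  have ht0 : t ≠ 0 := by
    intro h0
    rw [hyd, h0, zero_smul, add_zero] at h
    exact lt_irrefl _ h
  have hsub : c - (c + t • v) = (-t) • v := by module
  have hny : ‖c + t • v‖ ^ 2 = ‖c‖ ^ 2 + 2 * (t * ⟪c, v⟫) + t ^ 2 * ‖v‖ ^ 2 := by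
    rw [@norm_add_sq_real (Euc d), real_inner_smul_right, norm_smul]
    simp [mul_pow]
  have hn2 : ‖(-t) • v‖ ^ 2 = t ^ 2 * ‖v‖ ^ 2 := by
    rw [norm_smul]; rw [mul_pow]; simp [sq_abs]
  rw [Phi, hyd, hsub, hn2, hny, smul_smul]
  have hs : (‖c‖ ^ 2 - (‖c‖ ^ 2 + 2 * (t * ⟪c, v⟫) + t ^ 2 * ‖v‖ ^ 2)) / (t ^ 2 * ‖v‖ ^ 2)
      * (-t) = 1 := by
    have : 2 * (t * ⟪c, v⟫) = t * ((1 - t) * ‖v‖ ^ 2) := by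
      rw [← hcv]; ring
    rw [this]
    field_simp
    ring
  rw [hs, one_smul]

end Stmt9

/-- For 0 < |c| < L and 0 < β < |c|,
ν_L({σ : min(|c|, |σ(c)|) ≤ β}) = (2Lω_d)⁻¹·∫_{|y|≤β} |c − y|^{−(d−1)} dy. -/


theorem stmt_9 {d : ℕ} (hd : 1 ≤ d) {L : ℝ} (hL : 0 < L) (c : Euc d)
    (hc : 0 < ‖c‖) (hcL : ‖c‖ < L) (β : ℝ) (hβ : 0 < β) (hβc : β < ‖c‖) :
    reflMeasure d L {v | min ‖c‖ ‖reflPt v c‖ ≤ β} =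
      ENNReal.ofReal ((2 * L * omegaD d)⁻¹ *
        ∫ y in closedBall (0 : Euc d) β, (‖c - y‖ ^ (d - 1))⁻¹) := by
  classical
  set K : ℝ := (2 * L * omegaD d)⁻¹ with hKdef
  have hω : 0 ≤ omegaD d := by
    rw [omegaD]; positivity
  have hK : 0 ≤ K := by
    rw [hKdef]; positivity
  set S : Set (Euc d) := {v | min ‖c‖ ‖reflPt v c‖ ≤ β} with hSdef
  -- measurability of S
  have hrefl_meas : Measurable fun v : Euc d => reflPt v c := by
    unfold reflPt
    have h1 : Measurable fun v : Euc d => ⟪c, v⟫ := (innerSL ℝ c).continuous.measurable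
    have h2 : Measurable fun v : Euc d => ⟪v, v⟫ :=
      (continuous_inner.comp (continuous_id.prodMk continuous_id)).measurable
    exact measurable_const.add
      (((measurable_const.sub (((measurable_const.mul h1)).div h2))).smul measurable_id)
  have hS : MeasurableSet S := by
    have : Measurable fun v : Euc d => min ‖c‖ ‖reflPt v c‖ :=
      measurable_const.min hrefl_meas.norm
    exact measurableSet_le this measurable_const
  -- key facts about the closed ball
  have hball : ∀ y ∈ closedBall (0 : Euc d) β, ‖y‖ < ‖c‖ := fun y hy => by
    rw [mem_closedBall_zero_iff] at hy; linarith
  have hgpos : ∀ y ∈ closedBall (0 : Euc d) β, 0 < Stmt9.gfun c y := by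
    intro y hy
    have hy' := hball y hy
    have hne : y ≠ c := fun h => by rw [h] at hy'; exact lt_irrefl _ hy'
    have hcy : c - y ≠ 0 := sub_ne_zero.2 (Ne.symm hne)
    have hcy' : 0 < ‖c - y‖ := norm_pos_iff.2 hcy
    have hN : 0 < ‖c‖ ^ 2 - ‖y‖ ^ 2 := by nlinarith [norm_nonneg y, norm_nonneg c]
    rw [Stmt9.gfun]
    positivity
  -- set identity
  have hset : S ∩ (ball (0 : Euc d) (2 * L) \ {0}) = Stmt9.Phi c '' closedBall 0 β := by
    ext v
    constructor
    · rintro ⟨hvS, hvB, hv0⟩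
      have hv0' : v ≠ (0 : Euc d) := hv0
      have hmin : ‖reflPt v c‖ ≤ β := by
        have h' : min ‖c‖ ‖reflPt v c‖ ≤ β := hvS
        rcases min_le_iff.1 h' with h | h
        · linarith
        · exact h
      have hlt : ‖reflPt v c‖ < ‖c‖ := lt_of_le_of_lt hmin hβc
      refine ⟨reflPt v c, mem_closedBall_zero_iff.2 hmin, ?_⟩
      exact Stmt9.Phi_reflPt c v hv0' hlt
    · rintro ⟨y, hy, rfl⟩
      have hy' := hball y hy
      have hyβ : ‖y‖ ≤ β := mem_closedBall_zero_iff.1 hy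
      have hne : y ≠ c := fun h => by rw [h] at hy'; exact lt_irrefl _ hy'
      have hcy : c - y ≠ 0 := sub_ne_zero.2 (Ne.symm hne)
      have hcy' : 0 < ‖c - y‖ := norm_pos_iff.2 hcy
      have hg := hgpos y hy
      have hrefl : reflPt (Stmt9.Phi c y) c = y := Stmt9.reflPt_Phi c y hy'
      refine ⟨?_, ?_, ?_⟩
      · show min ‖c‖ ‖reflPt (Stmt9.Phi c y) c‖ ≤ β
        rw [hrefl]
        exact le_trans (min_le_right _ _) hyβ
      · -- ‖Phi c y‖ < 2L
        rw [mem_ball_zero_iff, Stmt9.Phi, norm_smul]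
        have hN : 0 < ‖c‖ ^ 2 - ‖y‖ ^ 2 := by nlinarith [norm_nonneg y, norm_nonneg c]
        have habs : |(‖c‖ ^ 2 - ‖y‖ ^ 2) / ‖c - y‖ ^ 2| = (‖c‖ ^ 2 - ‖y‖ ^ 2) / ‖c - y‖ ^ 2 :=
          abs_of_pos (by positivity)
        rw [Real.norm_eq_abs, habs]
        have hle : (‖c‖ ^ 2 - ‖y‖ ^ 2) / ‖c - y‖ ^ 2 * ‖c - y‖ ≤ ‖c‖ + ‖y‖ := by
          rw [div_mul_eq_mul_div, div_le_iff₀ (by positivity)]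
          have h1 : ‖c‖ - ‖y‖ ≤ ‖c - y‖ := by
            have := norm_sub_norm_le c y; linarith
          have h2 : (‖c‖ + ‖y‖) * (‖c‖ - ‖y‖) ≤ (‖c‖ + ‖y‖) * ‖c - y‖ :=
            mul_le_mul_of_nonneg_left h1 (by positivity)
          nlinarith [mul_le_mul_of_nonneg_right h2 hcy'.le]
        have : ‖c‖ + ‖y‖ < 2 * L := by linarith
        linarith
      · -- Phi c y ≠ 0
        show Stmt9.Phi c y ≠ 0
        rw [Stmt9.Phi]
        exact smul_ne_zero (ne_of_gt (by rw [Stmt9.gfun] at hg; exact hg)) hcy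
  -- derivative and injectivity hypotheses
  have hderiv : ∀ y ∈ closedBall (0 : Euc d) β,
      HasFDerivWithinAt (Stmt9.Phi c) (Stmt9.Phi' c y) (closedBall 0 β) y := by
    intro y hy
    have hy' := hball y hy
    have hne : y ≠ c := fun h => by rw [h] at hy'; exact lt_irrefl _ hy'
    exact (Stmt9.hasFDerivAt_Phi c y hne).hasFDerivWithinAt
  have hinj : InjOn (Stmt9.Phi c) (closedBall 0 β) := by
    intro y hy y' hy' h
    have := congrArg (fun v => reflPt v c) h
    simpa [Stmt9.reflPt_Phi c y (hball y hy), Stmt9.reflPt_Phi c y' (hball y' hy')] using this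
  -- compute the measure
  rw [reflMeasure, withDensity_apply _ hS, Measure.restrict_restrict hS, hset,
    lintegral_image_eq_lintegral_abs_det_fderiv_mul volume measurableSet_closedBall hderiv hinj]
  -- pointwise simplification of the integrand
  have hpt : ∀ y ∈ closedBall (0 : Euc d) β,
      ENNReal.ofReal |(Stmt9.Phi' c y).det| *
        ENNReal.ofReal ((2 * L * omegaD d)⁻¹ * (‖Stmt9.Phi c y‖ ^ (d - 1))⁻¹)
      = ENNReal.ofReal (K * ((‖c - y‖ ^ (d - 1))⁻¹)) := by
    intro y hy
    have hy' := hball y hy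
    have hne : y ≠ c := fun h => by rw [h] at hy'; exact lt_irrefl _ hy'
    have hcy : c - y ≠ 0 := sub_ne_zero.2 (Ne.symm hne)
    have hcy' : 0 < ‖c - y‖ := norm_pos_iff.2 hcy
    have hg := hgpos y hy
    rw [Stmt9.det_Phi' hd c y hne (ne_of_gt hg)]
    have habs : |(-Stmt9.gfun c y) ^ (d - 1)| = Stmt9.gfun c y ^ (d - 1) := by
      rw [abs_pow, abs_neg, abs_of_pos hg]
    rw [habs, ← ENNReal.ofReal_mul (by positivity)]
    congr 1
    have hnorm : ‖Stmt9.Phi c y‖ = Stmt9.gfun c y * ‖c - y‖ := by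
      have hg' : 0 < (‖c‖ ^ 2 - ‖y‖ ^ 2) / ‖c - y‖ ^ 2 := by
        rw [Stmt9.gfun] at hg; exact hg
      rw [Stmt9.Phi, norm_smul, Real.norm_eq_abs, abs_of_pos hg']; rfl
    rw [hnorm, ← hKdef, mul_pow]
    have h1 : Stmt9.gfun c y ^ (d - 1) ≠ 0 := pow_ne_zero _ (ne_of_gt hg)
    have h2 : ‖c - y‖ ^ (d - 1) ≠ 0 := pow_ne_zero _ (ne_of_gt hcy')
    field_simp
  rw [setLIntegral_congr_fun measurableSet_closedBall
    hpt]
  -- convert the lintegral to an integral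
  have hcont : ContinuousOn (fun y : Euc d => (‖c - y‖ ^ (d - 1))⁻¹) (closedBall 0 β) := by
    apply ContinuousOn.inv₀
    · exact ((continuous_const.sub continuous_id).norm.pow _).continuousOn
    · intro y hy
      have hy' := hball y hy
      have hne : y ≠ c := fun h => by rw [h] at hy'; exact lt_irrefl _ hy'
      have hcy : c - y ≠ 0 := sub_ne_zero.2 (Ne.symm hne)
      exact pow_ne_zero _ (norm_ne_zero_iff.2 hcy)
  have hint : IntegrableOn (fun y : Euc d => K * (‖c - y‖ ^ (d - 1))⁻¹)
      (closedBall 0 β) volume :=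
    ((hcont.integrableOn_compact (isCompact_closedBall _ _))).const_mul K
  rw [← ofReal_integral_eq_lintegral_ofReal hint
    (Filter.Eventually.of_forall fun y => mul_nonneg hK (by positivity)),
    integral_const_mul]

end
end

section
/- Let d ≥ 1, r > 0 and x ∈ ℝ^d with |x| ≤ 2r. Then the Lebesgue measure of the symmetric difference of two balls of radius r whose centers are at distance |x| is m(B_r △ (x + B_r)) = 2·(m(B_r) − 2·κ_{d−1}·r^d·∫₀^{arccos(|x|/(2r))} sin^d(t) dt), where κ_{d−1} is the volume of the unit ball in ℝ^{d−1} (κ₀ = 1). Moreover, the map s ↦ m(B_r △ (s·u + B_r)) (u a unit vector) has right derivative 2·κ_{d−1}·r^{d−1} at s = 0. -/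
open MeasureTheory Metric Set Filter
open scoped RealInnerProductSpace Classical

noncomputable section

section Aux
open intervalIntegral

lemma Gcont (r : ℝ) (n : ℕ) : Continuous (fun t : ℝ => Real.sqrt (r^2 - t^2) ^ n) :=
  (Real.continuous_sqrt.comp (by continuity)).pow n

lemma oneD (n : ℕ) {r s : ℝ} (hr : 0 < r) (hs : 0 ≤ s) (hs2 : s ≤ 2*r) :
    (∫ t in (s - r)..r, Real.sqrt (min (r^2 - t^2) (r^2 - (t - s)^2)) ^ n)
      = 2 * ∫ t in (s/2)..r, Real.sqrt (r^2 - t^2) ^ n := by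
  have hc : Continuous (fun t : ℝ => Real.sqrt (min (r^2 - t^2) (r^2 - (t - s)^2)) ^ n) :=
    (Real.continuous_sqrt.comp (by continuity)).pow n
  have h1 : s - r ≤ s/2 := by linarith
  have h2 : s/2 ≤ r := by linarith
  rw [← integral_add_adjacent_intervals (a := s - r) (b := s/2) (c := r)
      (hc.intervalIntegrable _ _) (hc.intervalIntegrable _ _)]
  have e2 : (∫ t in (s/2)..r, Real.sqrt (min (r^2 - t^2) (r^2 - (t - s)^2)) ^ n)
      = ∫ t in (s/2)..r, Real.sqrt (r^2 - t^2) ^ n := by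
    apply integral_congr
    intro t ht
    rw [uIcc_of_le h2] at ht
    have h : r^2 - t^2 ≤ r^2 - (t - s)^2 := by nlinarith [ht.1, ht.2]
    dsimp only
    rw [min_eq_left h]
  have e1 : (∫ t in (s - r)..(s/2), Real.sqrt (min (r^2 - t^2) (r^2 - (t - s)^2)) ^ n)
      = ∫ t in (s/2)..r, Real.sqrt (r^2 - t^2) ^ n := by
    have e0 : (∫ t in (s - r)..(s/2), Real.sqrt (min (r^2 - t^2) (r^2 - (t - s)^2)) ^ n)
        = ∫ t in (s - r)..(s/2), Real.sqrt (r^2 - (t - s)^2) ^ n := by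
      apply integral_congr
      intro t ht
      rw [uIcc_of_le h1] at ht
      have h : r^2 - (t - s)^2 ≤ r^2 - t^2 := by nlinarith [ht.1, ht.2]
      dsimp only
      rw [min_eq_right h]
    rw [e0, integral_comp_sub_right (fun t => Real.sqrt (r^2 - t^2) ^ n) s]
    have hn : s - r - s = -r := by ring
    have hn2 : s/2 - s = -(s/2) := by ring
    rw [hn, hn2, ← integral_comp_neg (fun t => Real.sqrt (r^2 - t^2) ^ n)]
    apply integral_congr
    intro t _
    norm_num
  rw [e1, e2]; ring

lemma sinConv (n : ℕ) {r s : ℝ} (hr : 0 < r) (hs : 0 ≤ s) (hs2 : s ≤ 2*r) :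
    (∫ t in (s/2)..r, Real.sqrt (r^2 - t^2) ^ n)
      = r^(n+1) * ∫ θ in (0:ℝ)..Real.arccos (s/(2*r)), Real.sin θ ^ (n+1) := by
  set a := Real.arccos (s/(2*r)) with ha
  have h01 : 0 ≤ s/(2*r) := by positivity
  have h02 : s/(2*r) ≤ 1 := by
    rw [div_le_one (by linarith)]; linarith
  have ha0 : 0 ≤ a := Real.arccos_nonneg _
  have haπ : a ≤ Real.pi := Real.arccos_le_pi _
  have hcos : Real.cos a = s/(2*r) := Real.cos_arccos (by linarith) h02
  have key := integral_comp_smul_deriv (a := 0) (b := a)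
      (f := fun θ => r * Real.cos θ) (f' := fun θ => -(r * Real.sin θ))
      (g := fun u => Real.sqrt (r^2 - u^2) ^ n)
      (fun x _ => by simpa using ((Real.hasDerivAt_cos x).const_mul r))
      ((continuous_const.mul Real.continuous_sin).neg.continuousOn) (Gcont r n)
  have hfa : r * Real.cos a = s/2 := by
    rw [hcos]; field_simp
  have hf0 : r * Real.cos 0 = r := by simp
  simp only [Function.comp, smul_eq_mul] at key
  rw [hf0, hfa] at key
  have lhs_eq : (∫ x in (0:ℝ)..a, -(r * Real.sin x) * Real.sqrt (r^2 - (r * Real.cos x)^2) ^ n)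
      = -(r^(n+1) * ∫ θ in (0:ℝ)..a, Real.sin θ ^ (n+1)) := by
    rw [← intervalIntegral.integral_const_mul, ← intervalIntegral.integral_neg]
    apply integral_congr
    intro x hx
    rw [uIcc_of_le ha0] at hx
    have hsin : 0 ≤ Real.sin x := Real.sin_nonneg_of_nonneg_of_le_pi hx.1 (hx.2.trans haπ)
    have hsq : r^2 - (r * Real.cos x)^2 = (r * Real.sin x)^2 := by
      have := Real.sin_sq_add_cos_sq x; nlinarith
    dsimp only
    rw [hsq, Real.sqrt_sq (by positivity)]
    ring
  rw [lhs_eq] at key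
  have hsymm : (∫ t in (r : ℝ)..(s/2), Real.sqrt (r^2 - t^2) ^ n)
      = -∫ t in (s/2)..r, Real.sqrt (r^2 - t^2) ^ n := intervalIntegral.integral_symm _ _
  rw [hsymm] at key
  linarith [key]


lemma kappa_nonneg (m : ℕ) : 0 ≤ kappa m := ENNReal.toReal_nonneg

lemma volume_ball_eq (m : ℕ) {ρ : ℝ} (hρ : 0 < ρ) :
    volume (ball (0 : EuclideanSpace ℝ (Fin m)) ρ) = ENNReal.ofReal (kappa m * ρ ^ m) := by
  rw [Measure.addHaar_ball_of_pos volume 0 hρ, finrank_euclideanSpace_fin,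
    ← ENNReal.ofReal_toReal (measure_ball_lt_top (x := (0 : EuclideanSpace ℝ (Fin m))) (r := 1)).ne,
    ← ENNReal.ofReal_mul (by positivity)]
  rw [mul_comm]
  rfl

lemma slice_vol (m : ℕ) {c : ℝ} (hc : 0 < c) :
    (volume {y : Fin m → ℝ | (∑ i, (y i)^2) < c})
      = ENNReal.ofReal (kappa m * Real.sqrt c ^ m) := by
  have hEq : {y : Fin m → ℝ | (∑ i, (y i)^2) < c}
      = (⇑((MeasurableEquiv.toLp 2 (Fin m → ℝ)).symm).symm) ⁻¹'
          (ball (0 : EuclideanSpace ℝ (Fin m)) (Real.sqrt c)) := by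
    ext y
    simp only [mem_preimage, mem_ball_zero_iff, mem_setOf_eq]
    rw [EuclideanSpace.norm_eq]
    have hco : ∀ i, (((MeasurableEquiv.toLp 2 (Fin m → ℝ)).symm).symm y) i = y i := by
      intro i
      rfl
    simp_rw [hco, Real.norm_eq_abs, sq_abs]
    rw [Real.sqrt_lt' (Real.sqrt_pos.2 hc), Real.sq_sqrt hc.le]
  rw [hEq,
    (((EuclideanSpace.volume_preserving_symm_measurableEquiv_toLp (Fin m)).symm _).measure_preimage)
      measurableSet_ball.nullMeasurableSet,
    volume_ball_eq m (Real.sqrt_pos.2 hc)]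

lemma slice_vol_zero (m : ℕ) {c : ℝ} (hc : c ≤ 0) :
    (volume {y : Fin m → ℝ | (∑ i, (y i)^2) < c}) = 0 := by
  convert measure_empty (μ := (volume : Measure (Fin m → ℝ)))
  ext y
  simp only [mem_setOf_eq, mem_empty_iff_false, iff_false, not_lt]
  exact hc.trans (by positivity)

lemma volume_inter (n : ℕ) {r s : ℝ} (hr : 0 < r) (hs : 0 ≤ s) (hs2 : s ≤ 2*r) :
    volume (ball (0 : EuclideanSpace ℝ (Fin (n+1))) r
        ∩ ball (s • EuclideanSpace.single (0 : Fin (n+1)) (1:ℝ)) r)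
      = ENNReal.ofReal (2 * kappa n * ∫ t in (s/2)..r, Real.sqrt (r^2 - t^2) ^ n) := by
  set e := EuclideanSpace.single (0 : Fin (n+1)) (1:ℝ) with he
  set S := ball (0 : EuclideanSpace ℝ (Fin (n+1))) r ∩ ball (s • e) r with hSdef
  have hS : MeasurableSet S := measurableSet_ball.inter measurableSet_ball
  set φ := (MeasurableEquiv.toLp 2 (Fin (n+1) → ℝ)).symm with hφdef
  set ψ := MeasurableEquiv.piFinSuccAbove (fun _ : Fin (n+1) => ℝ) 0 with hψdef
  set T : Set (Fin (n+1) → ℝ) := ⇑φ.symm ⁻¹' S with hTdef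
  have hT : MeasurableSet T := φ.symm.measurable hS
  have h1 : volume S = volume T :=
    (((EuclideanSpace.volume_preserving_symm_measurableEquiv_toLp (Fin (n+1))).symm _).measure_preimage
      hS.nullMeasurableSet).symm
  set U : Set (ℝ × (Fin n → ℝ)) := ⇑ψ.symm ⁻¹' T with hUdef
  have hU : MeasurableSet U := ψ.symm.measurable hT
  have h2 : volume T = ((volume : Measure ℝ).prod (volume : Measure (Fin n → ℝ))) U := by
    have hmp := (measurePreserving_piFinSuccAbove (fun _ : Fin (n+1) => (volume : Measure ℝ)) 0).symm _
    have h := hmp.measure_preimage (s := T) hT.nullMeasurableSet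
    simp only [← volume_pi] at h
    rw [volume_pi, ← volume_pi, ← h]
  have hUeq : U = {p : ℝ × (Fin n → ℝ) |
      (∑ i, (p.2 i)^2) < min (r^2 - p.1^2) (r^2 - (p.1 - s)^2)} := by
    ext ⟨t, y⟩
    simp only [hUdef, hTdef, mem_preimage, mem_setOf_eq]
    have hz : ∀ i, (φ.symm (ψ.symm (t, y))) i = (Fin.insertNth (α := fun _ => ℝ) (0 : Fin (n+1)) t y) i := by
      intro i
      rw [hφdef, hψdef,
        MeasurableEquiv.piFinSuccAbove_symm_apply]
      rfl
    have hsum1 : ∑ i, ((φ.symm (ψ.symm (t, y))) i)^2 = t^2 + ∑ j, (y j)^2 := by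
      simp_rw [hz]
      rw [Fin.sum_univ_succ, Fin.insertNth_apply_same]
      congr 1
    have hsum2 : ∑ i, ((φ.symm (ψ.symm (t, y))) i - (s • e) i)^2 = (t - s)^2 + ∑ j, (y j)^2 := by
      simp_rw [hz]
      rw [Fin.sum_univ_succ, Fin.insertNth_apply_same]
      have hs0 : (s • e) (0 : Fin (n+1)) = s := by
        rw [he, PiLp.smul_apply, EuclideanSpace.single_apply]
        simp
      rw [hs0]
      congr 1
      refine Finset.sum_congr rfl (fun j _ => ?_)
      have h1 : (s • e) (j.succ) = 0 := by
        rw [he, PiLp.smul_apply, EuclideanSpace.single_apply]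
        simp [Fin.succ_ne_zero]
      rw [h1, sub_zero]
      congr 1
    rw [hSdef, mem_inter_iff, mem_ball_zero_iff, mem_ball_iff_norm,
      EuclideanSpace.norm_eq, EuclideanSpace.norm_eq,
      Real.sqrt_lt' hr, Real.sqrt_lt' hr]
    simp_rw [PiLp.sub_apply, Real.norm_eq_abs, sq_abs]
    rw [hsum1, hsum2, lt_min_iff]
    constructor
    · rintro ⟨h1', h2'⟩
      exact ⟨by linarith, by linarith⟩
    · rintro ⟨h1', h2'⟩
      exact ⟨by linarith, by linarith⟩
  have h3 : ((volume : Measure ℝ).prod (volume : Measure (Fin n → ℝ))) U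
      = ∫⁻ t : ℝ, volume {y : Fin n → ℝ |
          (∑ i, (y i)^2) < min (r^2 - t^2) (r^2 - (t - s)^2)} := by
    rw [Measure.prod_apply hU]
    congr 1
    ext t
    congr 1
    rw [hUeq]
    rfl
  have h4 : ∀ t : ℝ, volume {y : Fin n → ℝ |
        (∑ i, (y i)^2) < min (r^2 - t^2) (r^2 - (t - s)^2)}
      = Set.indicator (Ioo (s - r) r)
          (fun t => ENNReal.ofReal
            (kappa n * Real.sqrt (min (r^2 - t^2) (r^2 - (t - s)^2)) ^ n)) t := by
    intro t
    by_cases ht : t ∈ Ioo (s - r) r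
    · rw [Set.indicator_of_mem ht]
      have hmin : 0 < min (r^2 - t^2) (r^2 - (t - s)^2) := by
        obtain ⟨h1', h2'⟩ := ht
        rw [lt_min_iff]
        constructor <;> nlinarith
      exact slice_vol n hmin
    · rw [Set.indicator_of_notMem ht]
      apply slice_vol_zero
      rw [mem_Ioo, not_and_or, not_lt, not_lt] at ht
      rcases ht with h' | h'
      · exact min_le_of_right_le (by nlinarith)
      · exact min_le_of_left_le (by nlinarith)
  have hcmin : Continuous
      (fun t : ℝ => kappa n * Real.sqrt (min (r^2 - t^2) (r^2 - (t - s)^2)) ^ n) :=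
    continuous_const.mul ((Real.continuous_sqrt.comp
      ((continuous_const.sub (continuous_pow 2)).min
        (continuous_const.sub ((continuous_id.sub continuous_const).pow 2)))).pow n)
  have h5 : (∫⁻ t : ℝ, Set.indicator (Ioo (s - r) r)
        (fun t => ENNReal.ofReal
          (kappa n * Real.sqrt (min (r^2 - t^2) (r^2 - (t - s)^2)) ^ n)) t)
      = ENNReal.ofReal (∫ t in Ioo (s - r) r,
          kappa n * Real.sqrt (min (r^2 - t^2) (r^2 - (t - s)^2)) ^ n) := by
    rw [lintegral_indicator measurableSet_Ioo]
    rw [ofReal_integral_eq_lintegral_ofReal]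
    · exact ((hcmin.continuousOn.integrableOn_compact isCompact_Icc).mono_set
        Ioo_subset_Icc_self)
    · exact Filter.Eventually.of_forall (fun t =>
        mul_nonneg (kappa_nonneg n) (pow_nonneg (Real.sqrt_nonneg _) n))
  have h6 : (∫ t in Ioo (s - r) r,
        kappa n * Real.sqrt (min (r^2 - t^2) (r^2 - (t - s)^2)) ^ n)
      = 2 * kappa n * ∫ t in (s/2)..r, Real.sqrt (r^2 - t^2) ^ n := by
    rw [← integral_Ioc_eq_integral_Ioo, ← intervalIntegral.integral_of_le (by linarith),
      intervalIntegral.integral_const_mul, oneD n hr hs hs2]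
    ring
  rw [h1, h2, h3]
  rw [lintegral_congr h4, h5, h6]

lemma symmDiff_toReal {α : Type*} [MeasurableSpace α] {μ : Measure α} {A B : Set α}
    (hA : MeasurableSet A) (hB : MeasurableSet B) (hfA : μ A ≠ ⊤) (hfB : μ B ≠ ⊤) :
    (μ (symmDiff A B)).toReal = (μ A).toReal + (μ B).toReal - 2 * (μ (A ∩ B)).toReal := by
  have hI : μ (A ∩ B) ≠ ⊤ := fun h => hfA (top_le_iff.1 (h ▸ measure_mono inter_subset_left))
  have hUn : μ (A ∪ B) ≠ ⊤ := by
    refine fun h => hfA ?_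
    have := measure_union_le (μ := μ) A B
    rw [h] at this
    rcases ENNReal.add_eq_top.1 (top_le_iff.1 this) with h' | h'
    · exact h'
    · exact absurd h' hfB
  have hD : μ (symmDiff A B) ≠ ⊤ :=
    fun h => hUn (top_le_iff.1 (h ▸ measure_mono symmDiff_subset_union))
  have hdisj : Disjoint (symmDiff A B) (A ∩ B) := by
    rw [Set.disjoint_left]
    rintro a ham ⟨ha, hb⟩
    rcases Set.mem_symmDiff.1 ham with ⟨_, h⟩ | ⟨_, h⟩
    · exact h hb
    · exact h ha
  have hcover : symmDiff A B ∪ (A ∩ B) = A ∪ B := by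
    ext a
    by_cases ha : a ∈ A <;> by_cases hb : a ∈ B <;> simp [Set.mem_symmDiff, ha, hb]
  have h1 : μ (symmDiff A B) + μ (A ∩ B) = μ (A ∪ B) := by
    rw [← measure_union hdisj (hA.inter hB), hcover]
  have h2 : μ (A ∪ B) + μ (A ∩ B) = μ A + μ B := measure_union_add_inter A hB
  have t1 : (μ (symmDiff A B)).toReal + (μ (A ∩ B)).toReal = (μ (A ∪ B)).toReal := by
    rw [← ENNReal.toReal_add hD hI, h1]
  have t2 : (μ (A ∪ B)).toReal + (μ (A ∩ B)).toReal = (μ A).toReal + (μ B).toReal := by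
    rw [← ENNReal.toReal_add hUn hI, h2, ENNReal.toReal_add hfA hfB]
  linarith

lemma transfer {d : ℕ} (i0 : Fin d) (x : EuclideanSpace ℝ (Fin d)) (r : ℝ) :
    volume (symmDiff (ball (0 : EuclideanSpace ℝ (Fin d)) r) (ball x r))
      = volume (symmDiff (ball (0 : EuclideanSpace ℝ (Fin d)) r)
          (ball (‖x‖ • EuclideanSpace.single i0 (1:ℝ)) r)) := by
  rcases eq_or_ne x 0 with rfl | hx
  · simp
  · have hnx : ‖x‖ ≠ 0 := norm_ne_zero_iff.2 hx
    have hv : Orthonormal ℝ (({i0} : Set (Fin d)).restrict (fun _ => ‖x‖⁻¹ • x)) := by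
      constructor
      · intro i
        show ‖‖x‖⁻¹ • x‖ = 1
        rw [norm_smul, norm_inv, norm_norm, inv_mul_cancel₀ hnx]
      · intro i j hij
        exact absurd (Subtype.ext ((mem_singleton_iff.1 i.2).trans
          (mem_singleton_iff.1 j.2).symm)) hij
    obtain ⟨b, hb⟩ := hv.exists_orthonormalBasis_extension_of_card_eq
      (by simp [finrank_euclideanSpace_fin])
    have hbi : b i0 = ‖x‖⁻¹ • x := hb i0 rfl
    have hrepr : b.repr x = ‖x‖ • EuclideanSpace.single i0 (1:ℝ) := by
      have hxe : x = ‖x‖ • (‖x‖⁻¹ • x) := by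
        rw [smul_smul, mul_inv_cancel₀ hnx, one_smul]
      conv_lhs => rw [hxe]
      rw [LinearIsometryEquiv.map_smul, ← hbi, OrthonormalBasis.repr_self]
    have hmeas : MeasurableSet (symmDiff (ball (0 : EuclideanSpace ℝ (Fin d)) r) (ball x r)) :=
      measurableSet_ball.symmDiff measurableSet_ball
    rw [← (b.measurePreserving_repr_symm).measure_preimage hmeas.nullMeasurableSet]
    congr 1
    rw [preimage_symmDiff, LinearIsometryEquiv.preimage_ball, LinearIsometryEquiv.preimage_ball,
      LinearIsometryEquiv.symm_symm, map_zero, hrepr]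

lemma main_G (n : ℕ) {r : ℝ} (hr : 0 < r) (x : EuclideanSpace ℝ (Fin (n+1)))
    (hx : ‖x‖ ≤ 2*r) :
    (volume (symmDiff (ball (0 : EuclideanSpace ℝ (Fin (n+1))) r) (ball x r))).toReal
      = 2 * ((volume (ball (0 : EuclideanSpace ℝ (Fin (n+1))) r)).toReal
          - 2 * kappa n * ∫ t in (‖x‖/2)..r, Real.sqrt (r^2 - t^2) ^ n) := by
  rw [transfer 0 x r]
  have hs0 : 0 ≤ ‖x‖ := norm_nonneg x
  rw [symmDiff_toReal measurableSet_ball measurableSet_ball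
      measure_ball_lt_top.ne measure_ball_lt_top.ne]
  rw [volume_inter n hr hs0 hx]
  have hball : volume (ball (‖x‖ • EuclideanSpace.single (0 : Fin (n+1)) (1:ℝ)) r)
      = volume (ball (0 : EuclideanSpace ℝ (Fin (n+1))) r) :=
    Measure.addHaar_ball_center volume _ r
  rw [hball]
  have hint : 0 ≤ ∫ t in (‖x‖/2)..r, Real.sqrt (r^2 - t^2) ^ n :=
    intervalIntegral.integral_nonneg (by linarith) (fun t _ => by positivity)
  have hκ := kappa_nonneg n
  rw [ENNReal.toReal_ofReal (by positivity)]
  ring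

lemma deriv_part (n : ℕ) {r : ℝ} (hr : 0 < r) (u : EuclideanSpace ℝ (Fin (n+1)))
    (hu : ‖u‖ = 1) :
    HasDerivWithinAt
      (fun s : ℝ => (volume (symmDiff (ball (0 : EuclideanSpace ℝ (Fin (n+1))) r)
        (ball (s • u) r))).toReal)
      (2 * kappa n * r ^ n) (Ici (0 : ℝ)) 0 := by
  set V := (volume (ball (0 : EuclideanSpace ℝ (Fin (n+1))) r)).toReal with hV
  set H : ℝ → ℝ :=
    fun s => 2 * (V - 2 * kappa n * ∫ t in (s/2)..r, Real.sqrt (r^2 - t^2) ^ n) with hHdef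
  have hagree : ∀ s ∈ Icc (0:ℝ) (2*r),
      (volume (symmDiff (ball (0 : EuclideanSpace ℝ (Fin (n+1))) r)
        (ball (s • u) r))).toReal = H s := by
    intro s hsm
    have hnorm : ‖s • u‖ = s := by
      rw [norm_smul, hu, mul_one, Real.norm_eq_abs, abs_of_nonneg hsm.1]
    have h := main_G n hr (s • u) (by rw [hnorm]; exact hsm.2)
    rw [hnorm] at h
    exact h
  have hbase : HasDerivAt (fun c : ℝ => ∫ t in c..r, Real.sqrt (r^2 - t^2) ^ n)
      (-(Real.sqrt (r^2 - 0^2) ^ n)) ((0:ℝ)/2) := by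
    have h := intervalIntegral.integral_hasDerivAt_left
      ((Gcont r n).intervalIntegrable ((0:ℝ)/2) r)
      ⟨univ, Filter.univ_mem, ((Gcont r n).aestronglyMeasurable).restrict⟩
      (Gcont r n).continuousAt
    simpa using h
  have hcomp : HasDerivAt (fun s : ℝ => ∫ t in (s/2)..r, Real.sqrt (r^2 - t^2) ^ n)
      (-(Real.sqrt (r^2 - 0^2) ^ n) * (1/2)) 0 := by
    have hg : HasDerivAt (fun s : ℝ => s/2) (1/2) 0 := by
      simpa using (hasDerivAt_id (0:ℝ)).div_const 2
    exact HasDerivAt.comp 0 hbase hg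
  have hG0 : Real.sqrt (r^2 - 0^2) = r := by
    norm_num
    exact Real.sqrt_sq hr.le
  have hHd : HasDerivAt H (2 * kappa n * r ^ n) 0 := by
    have h1 := ((hcomp.const_mul (2 * kappa n)).const_sub V).const_mul (2:ℝ)
    rw [hG0] at h1
    rw [show (2 * kappa n * r ^ n) = 2 * -(2 * kappa n * (-r ^ n * (1 / 2))) by ring]
    exact h1
  refine (hHd.hasDerivWithinAt).congr_of_eventuallyEq ?_ ?_
  · have hmem : Icc (0:ℝ) (2*r) ∈ nhdsWithin (0:ℝ) (Ici 0) := by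
      rw [← Ici_inter_Iic]
      exact Filter.inter_mem self_mem_nhdsWithin
        (mem_nhdsWithin_of_mem_nhds (Iic_mem_nhds (by linarith)))
    exact Filter.eventually_of_mem hmem hagree
  · exact hagree 0 ⟨le_refl 0, by linarith⟩

end Aux

/-- Symmetric difference of two balls of radius r with centers at distance |x| ≤ 2r:
m(B_r △ (x + B_r)) = 2·(m(B_r) − 2·κ_{d−1}·r^d·∫₀^{arccos(|x|/(2r))} sin^d t dt); moreover
s ↦ m(B_r △ (s·u + B_r)) has right derivative 2·κ_{d−1}·r^{d−1} at s = 0. -/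
theorem stmt_12 {d : ℕ} (hd : 1 ≤ d) (r : ℝ) (hr : 0 < r) (x : Euc d) (hx : ‖x‖ ≤ 2 * r)
    (u : Euc d) (hu : ‖u‖ = 1) :
    (volume (symmDiff (ball (0 : Euc d) r) (ball x r))).toReal =
        2 * ((volume (ball (0 : Euc d) r)).toReal -
          2 * kappa (d - 1) * r ^ d *
            ∫ t in (0 : ℝ)..Real.arccos (‖x‖ / (2 * r)), Real.sin t ^ d) ∧
      HasDerivWithinAt
        (fun s : ℝ => (volume (symmDiff (ball (0 : Euc d) r) (ball (s • u) r))).toReal)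
        (2 * kappa (d - 1) * r ^ (d - 1)) (Ici (0 : ℝ)) 0 := by
  obtain ⟨n, rfl⟩ : ∃ n, d = n + 1 := ⟨d - 1, (Nat.succ_pred_eq_of_pos hd).symm⟩
  simp only [Nat.add_sub_cancel]
  constructor
  · rw [main_G n hr x hx, sinConv n hr (norm_nonneg x) hx]
    ring
  · exact deriv_part n hr u hu

end
end

section
/- Let d = 1 and L > 0, and let Xₙ be the center-distance chain of random polarizations of an interval x₀ + B_r with 0 < |x₀| < L − r. Then n·Xₙ converges in distribution, as n → ∞, to the exponential distribution with mean 2L, and n·zₙ → 2L (i.e. 𝔼_{ℙ_L}(Xₙ) ~ 2L·n^{−1}). -/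
open MeasureTheory Metric Set Filter
open scoped RealInnerProductSpace Classical

noncomputable section

lemma inner1 (y v : Euc 1) : ⟪y, v⟫ = y 0 * v 0 := by
  simp [PiLp.inner_apply, RCLike.inner_apply, Fin.sum_univ_one, mul_comm]

lemma norm1 (v : Euc 1) : ‖v‖ = |v 0| := by
  rw [EuclideanSpace.norm_eq]
  simp [Fin.sum_univ_one, Real.sqrt_sq_eq_abs]

lemma euc1_eq_zero {v : Euc 1} (h : v 0 = 0) : v = 0 := by
  ext i
  have : i = 0 := Subsingleton.elim _ _
  rw [this]; exact h

lemma reflPt_apply (v y : Euc 1) (hv : v 0 ≠ 0) : (reflPt v y) 0 = v 0 - y 0 := by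
  show y 0 + (1 - 2 * ⟪y, v⟫ / ⟪v, v⟫) * v 0 = v 0 - y 0
  rw [inner1, inner1]
  field_simp
  ring

lemma cond_iff (v c : Euc 1) : ¬ (⟪c, v⟫ ≤ ‖v‖ ^ 2 / 2) ↔ |v 0 - c 0| < |c 0| := by
  rw [inner1, norm1, sq_abs, not_le, ← sq_lt_sq]
  constructor <;> intro h <;> nlinarith

lemma pc_norm_le (v c : Euc 1) : ‖polarizeCenter v c‖ ≤ ‖c‖ := by
  by_cases h : ⟪c, v⟫ ≤ ‖v‖ ^ 2 / 2
  · rw [polarizeCenter, if_pos h]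
  · have hlt := (cond_iff v c).mp h
    have hv : v 0 ≠ 0 := by
      intro hv0
      apply h
      rw [inner1, norm1, hv0, mul_zero]
      simp
    rw [polarizeCenter, if_neg h, norm1, norm1, reflPt_apply v c hv]
    exact le_of_lt hlt

lemma pc_set (c : Euc 1) (t : ℝ) (htc : t < ‖c‖) :
    {v : Euc 1 | t < ‖polarizeCenter v c‖} = {v : Euc 1 | v 0 ∉ Icc (c 0 - t) (c 0 + t)} := by
  have htc' : t < |c 0| := by rwa [norm1] at htc
  ext v
  simp only [mem_setOf_eq, mem_Icc, not_and_or, not_le]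
  have hmem : (c 0 - t ≤ v 0 ∧ v 0 ≤ c 0 + t) ↔ |v 0 - c 0| ≤ t := by
    rw [abs_le]; constructor <;> intro h <;> constructor <;> linarith [h.1, h.2]
  by_cases h : ⟪c, v⟫ ≤ ‖v‖ ^ 2 / 2
  · rw [polarizeCenter, if_pos h, norm1]
    have hno : ¬ (c 0 - t ≤ v 0 ∧ v 0 ≤ c 0 + t) := by
      intro hc
      exact ((cond_iff v c).mpr (lt_of_le_of_lt (hmem.mp hc) htc')) h
    constructor
    · intro _
      rcases not_and_or.mp hno with h1 | h1
      · exact Or.inl (not_le.mp h1)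
      · exact Or.inr (not_le.mp h1)
    · intro _; exact htc'
  · have hv : v 0 ≠ 0 := by
      intro hv0
      apply h
      rw [inner1, norm1, hv0, mul_zero]
      simp
    rw [polarizeCenter, if_neg h, norm1, reflPt_apply v c hv]
    rw [← not_le, ← hmem, not_and_or, not_le, not_le]

lemma psi_mp : MeasurePreserving
    ((MeasurableEquiv.toLp 2 (Fin 1 → ℝ)).symm.trans (MeasurableEquiv.funUnique (Fin 1) ℝ))
    volume volume :=
  (EuclideanSpace.volume_preserving_symm_measurableEquiv_toLp (Fin 1)).trans
    (volume_preserving_funUnique (Fin 1) ℝ)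

lemma vol_pre (s : Set ℝ) (hs : MeasurableSet s) :
    volume {v : Euc 1 | v 0 ∈ s} = volume s := by
  have h := psi_mp.measure_preimage hs.nullMeasurableSet
  convert h using 2
  rfl

lemma vol_ball (R : ℝ) : volume (ball (0 : Euc 1) R) = ENNReal.ofReal (2 * R) := by
  have h : ball (0 : Euc 1) R = {v : Euc 1 | v 0 ∈ ball (0 : ℝ) R} := by
    ext v
    simp [mem_ball_zero_iff, norm1, Real.norm_eq_abs]
  rw [h, vol_pre _ measurableSet_ball, Real.volume_ball]

lemma vol_singleton : volume ({0} : Set (Euc 1)) = 0 := by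
  have h : ({0} : Set (Euc 1)) = {v : Euc 1 | v 0 ∈ ({0} : Set ℝ)} := by
    ext v
    simp only [mem_singleton_iff, mem_setOf_eq]
    constructor
    · intro h; rw [h]; rfl
    · exact euc1_eq_zero
  rw [h, vol_pre _ (measurableSet_singleton 0), Real.volume_singleton]

lemma vol_D {L : ℝ} : volume (ball (0 : Euc 1) (2 * L) \ {0}) = ENNReal.ofReal (4 * L) := by
  rw [measure_diff_null vol_singleton, vol_ball]
  ring_nf

lemma reflMeasure_eq (L : ℝ) :
    reflMeasure 1 L
      = (ENNReal.ofReal (4 * L)⁻¹) • (volume.restrict (ball (0 : Euc 1) (2 * L) \ {0})) := by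
  have homega : omegaD 1 = 2 := by
    rw [omegaD, vol_ball]
    norm_num
  have hfun : (fun v : Euc 1 => ENNReal.ofReal ((2 * L * omegaD 1)⁻¹ * (‖v‖ ^ (1 - 1))⁻¹))
      = fun _ => ENNReal.ofReal (4 * L)⁻¹ := by
    funext v
    norm_num [homega]
    ring_nf
    rw [← ENNReal.ofReal_mul (by norm_num)]; ring_nf
  rw [reflMeasure, hfun, withDensity_const]

lemma meas_eval : Measurable fun v : Euc 1 => v 0 :=
  (EuclideanSpace.proj (0 : Fin 1) : Euc 1 →L[ℝ] ℝ).continuous.measurable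

lemma measD {L : ℝ} : MeasurableSet (ball (0 : Euc 1) (2 * L) \ {0}) :=
  measurableSet_ball.diff (measurableSet_singleton 0)

lemma slice_zero (c : Euc 1) (t : ℝ) (htc : ‖c‖ ≤ t) :
    {v : Euc 1 | t < ‖polarizeCenter v c‖} = ∅ := by
  apply eq_empty_of_forall_notMem
  intro v hv
  exact absurd hv (not_lt.mpr (le_trans (pc_norm_le v c) htc))

lemma sliceM (L t : ℝ) (hL : 0 < L) (c : Euc 1) (ht : 0 ≤ t) (htc : t < ‖c‖)
    (hsum : ‖c‖ + t < 2 * L) :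
    reflMeasure 1 L {v : Euc 1 | t < ‖polarizeCenter v c‖} = ENNReal.ofReal (1 - t / (2 * L)) := by
  have htc' : t < |c 0| := by rwa [norm1] at htc
  have hsum' : |c 0| + t < 2 * L := by rwa [norm1] at hsum
  rw [reflMeasure_eq, Measure.smul_apply, Measure.restrict_apply' measD, pc_set c t htc]
  set X : Set (Euc 1) := {v : Euc 1 | v 0 ∈ Icc (c 0 - t) (c 0 + t)} with hX
  have hseteq : {v : Euc 1 | v 0 ∉ Icc (c 0 - t) (c 0 + t)} ∩ (ball (0 : Euc 1) (2 * L) \ {0})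
      = (ball (0 : Euc 1) (2 * L) \ {0}) \ X := by
    ext v
    simp only [hX, mem_inter_iff, mem_setOf_eq, mem_diff]
    tauto
  have hXsub : X ⊆ ball (0 : Euc 1) (2 * L) \ {0} := by
    intro v hv
    simp only [hX, mem_setOf_eq, mem_Icc] at hv
    have habs : |v 0 - c 0| ≤ t := abs_le.mpr ⟨by linarith [hv.1], by linarith [hv.2]⟩
    constructor
    · rw [mem_ball_zero_iff, norm1]
      calc |v 0| = |c 0 + (v 0 - c 0)| := by ring_nf
        _ ≤ |c 0| + |v 0 - c 0| := abs_add_le _ _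
        _ ≤ |c 0| + t := by linarith
        _ < 2 * L := hsum'
    · intro h0
      rw [mem_singleton_iff] at h0
      have : v 0 = 0 := by rw [h0]; rfl
      rw [this] at habs
      simp only [zero_sub, abs_neg] at habs
      exact absurd (lt_of_lt_of_le htc' habs) (lt_irrefl t)
  have hXmeas : MeasurableSet X :=
    measurableSet_Icc.preimage meas_eval
  have hXvol : volume X = ENNReal.ofReal (2 * t) := by
    rw [hX]
    rw [vol_pre _ measurableSet_Icc, Real.volume_Icc]
    ring_nf
  rw [hseteq, measure_diff hXsub hXmeas.nullMeasurableSet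
    (by rw [hXvol]; exact ENNReal.ofReal_ne_top), vol_D, hXvol]
  rw [← ENNReal.ofReal_sub _ (by linarith : (0:ℝ) ≤ 2 * t), smul_eq_mul,
    ← ENNReal.ofReal_mul (by positivity)]
  congr 1
  field_simp
  ring

lemma isProb_refl {L : ℝ} (hL : 0 < L) : IsProbabilityMeasure (reflMeasure 1 L) := by
  constructor
  rw [reflMeasure_eq, Measure.smul_apply, Measure.restrict_apply' measD, univ_inter, vol_D,
    smul_eq_mul, ← ENNReal.ofReal_mul (by positivity)]
  rw [inv_mul_cancel₀ (by positivity : (4 : ℝ) * L ≠ 0)]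
  exact ENNReal.ofReal_one

lemma isProb_pol {L : ℝ} (hL : 0 < L) (n : ℕ) : IsProbabilityMeasure (polMeasure 1 L n) := by
  haveI := isProb_refl hL
  rw [polMeasure]
  infer_instance

set_option maxHeartbeats 1000000 in
lemma measurable_pc : Measurable fun p : Euc 1 × Euc 1 => polarizeCenter p.1 p.2 := by
  unfold polarizeCenter reflPt
  apply Measurable.ite
  · apply measurableSet_le
    · exact (Continuous.inner continuous_snd continuous_fst).measurable
    · exact (measurable_fst.norm.pow measurable_const).div measurable_const
  · exact measurable_snd
  · apply Measurable.add measurable_snd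
    apply Measurable.smul (f := fun x : Euc 1 × Euc 1 => (1 - 2 * ⟪x.2, x.1⟫ / ⟪x.1, x.1⟫ : ℝ)) (g := Prod.fst) _ measurable_fst
    apply Measurable.sub measurable_const
    exact (((Continuous.inner continuous_snd continuous_fst).measurable).const_mul 2).div
      ((Continuous.inner continuous_fst continuous_fst).measurable)

set_option maxHeartbeats 2000000 in
lemma measurable_chain (x₀ : Euc 1) : ∀ n, Measurable fun σs : Fin n → Euc 1 => chain σs x₀
  | 0 => measurable_const
  | n + 1 => by
    simp only [chain]
    have h1 : Measurable fun σs : Fin (n + 1) → Euc 1 => σs (Fin.last n) :=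
      measurable_pi_apply _
    have h2 : Measurable fun σs : Fin (n + 1) → Euc 1 => (fun i : Fin n => σs i.castSucc) :=
      measurable_pi_lambda _ fun i => measurable_pi_apply _
    have h3 : Measurable fun σs : Fin (n + 1) → Euc 1 =>
        chain (fun i : Fin n => σs i.castSucc) x₀ := (measurable_chain x₀ n).comp h2
    exact measurable_pc.comp (h1.prodMk h3)

lemma chain_norm_le (x₀ : Euc 1) : ∀ {n : ℕ} (σs : Fin n → Euc 1), ‖chain σs x₀‖ ≤ ‖x₀‖
  | 0, _ => le_refl _
  | n + 1, σs =>
    le_trans (pc_norm_le _ _) (chain_norm_le x₀ fun i : Fin n => σs i.castSucc)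

lemma measurable_chain_set (x₀ : Euc 1) (t : ℝ) (n : ℕ) :
    MeasurableSet {σs : Fin n → Euc 1 | t < ‖chain σs x₀‖} :=
  measurableSet_lt measurable_const (measurable_chain x₀ n).norm

lemma measure_chain_gt {L : ℝ} (hL : 0 < L) (x₀ : Euc 1) (t : ℝ) (ht : 0 ≤ t)
    (htx : t < ‖x₀‖) (hs : ‖x₀‖ + t < 2 * L) :
    ∀ n, polMeasure 1 L n {σs | t < ‖chain σs x₀‖}
      = (ENNReal.ofReal (1 - t / (2 * L))) ^ n := by
  haveI := isProb_refl hL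
  intro n
  induction n with
  | zero =>
    haveI := isProb_pol hL 0
    have huniv : {σs : Fin 0 → Euc 1 | t < ‖chain σs x₀‖} = univ :=
      eq_univ_of_forall fun σs => htx
    rw [huniv, measure_univ, pow_zero]
  | succ n ih =>
    haveI := isProb_pol hL n
    set e := MeasurableEquiv.piFinSuccAbove (fun _ : Fin (n + 1) => Euc 1) (Fin.last n) with he
    have mp := (measurePreserving_piFinSuccAbove
      (fun _ : Fin (n + 1) => reflMeasure 1 L) (Fin.last n)).symm
    set T : Set (Euc 1 × (Fin n → Euc 1)) :=
      {p | t < ‖polarizeCenter p.1 (chain p.2 x₀)‖} with hT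
    have hTm : MeasurableSet T := by
      apply measurableSet_lt measurable_const
      exact (measurable_pc.comp
        (measurable_fst.prodMk ((measurable_chain x₀ n).comp measurable_snd))).norm
    have hpre : e.symm ⁻¹' {σs : Fin (n + 1) → Euc 1 | t < ‖chain σs x₀‖} = T := by
      ext p
      obtain ⟨v, σs'⟩ := p
      simp only [mem_preimage, mem_setOf_eq, hT]
      have hsymm : e.symm (v, σs') = Fin.insertNth (Fin.last n) v σs' := rfl
      have hchain : chain (Fin.insertNth (Fin.last n) v σs') x₀
          = polarizeCenter v (chain σs' x₀) := by
        have ha : Fin.insertNth (α := fun _ => Euc 1) (Fin.last n) v σs' (Fin.last n) = v :=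
          Fin.insertNth_apply_same _ _ _
        have hb : (fun i : Fin n =>
            Fin.insertNth (α := fun _ => Euc 1) (Fin.last n) v σs' i.castSucc) = σs' := by
          funext i
          rw [← Fin.succAbove_last]
          exact Fin.insertNth_apply_succAbove _ _ _ _
        simp only [chain, ha, hb]
      rw [hsymm, hchain]
    have key : polMeasure 1 L (n + 1) {σs | t < ‖chain σs x₀‖}
        = ((reflMeasure 1 L).prod (polMeasure 1 L n)) T := by
      rw [← hpre]
      exact (mp.measure_preimage (measurable_chain_set x₀ t (n+1)).nullMeasurableSet).symm
    rw [key, Measure.prod_apply_symm hTm]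
    have hslice : ∀ σs' : Fin n → Euc 1,
        reflMeasure 1 L ((fun v => (v, σs')) ⁻¹' T)
          = Set.indicator {σs' : Fin n → Euc 1 | t < ‖chain σs' x₀‖}
              (fun _ => ENNReal.ofReal (1 - t / (2 * L))) σs' := by
      intro σs'
      have hpre2 : (fun v => (v, σs')) ⁻¹' T
          = {v : Euc 1 | t < ‖polarizeCenter v (chain σs' x₀)‖} := rfl
      rw [hpre2]
      by_cases hc : t < ‖chain σs' x₀‖
      · rw [sliceM L t hL _ ht hc
          (lt_of_le_of_lt (add_le_add_left (chain_norm_le x₀ σs') t) hs)]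
        rw [Set.indicator_of_mem
          (show σs' ∈ {σs' : Fin n → Euc 1 | t < ‖chain σs' x₀‖} from hc)]
      · rw [slice_zero _ _ (not_lt.mp hc), measure_empty, Set.indicator_of_notMem
          (show σs' ∉ {σs' : Fin n → Euc 1 | t < ‖chain σs' x₀‖} from hc)]
    rw [lintegral_congr hslice, lintegral_indicator (measurable_chain_set x₀ t n),
      setLIntegral_const, ih, pow_succ, mul_comm]

/-- In dimension d = 1, n·Xₙ converges in distribution to the exponential distribution with
mean 2L (equivalently, its CDF converges pointwise to t ↦ 1 − e^{−t/(2L)}), and n·zₙ → 2L. -/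
theorem stmt_13 {L r : ℝ} (hr : 0 < r) (x₀ : Euc 1) (hx₀ : 0 < ‖x₀‖) (hx₀L : ‖x₀‖ < L - r) :
    (∀ t : ℝ, 0 ≤ t →
        Tendsto (fun n : ℕ => polMeasure 1 L n {σs | (n : ℝ) * ‖chain σs x₀‖ ≤ t}) atTop
          (nhds (ENNReal.ofReal (1 - Real.exp (-t / (2 * L)))))) ∧
      Tendsto (fun n : ℕ => (n : ℝ) * zchain 1 L x₀ n) atTop (nhds (2 * L)) := by
  have hL : 0 < L := by linarith
  have hzL : ‖x₀‖ < L := by linarith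
  have hz2L : ‖x₀‖ < 2 * L := by linarith
  haveI := isProb_refl hL
  constructor
  · intro t ht
    have hre : Tendsto (fun n : ℕ => (1 - (t / n) / (2 * L)) ^ n) atTop
        (nhds (Real.exp (-t / (2 * L)))) := by
      refine (Real.tendsto_one_add_div_pow_exp (-t / (2 * L))).congr fun n => ?_
      congr 1
      ring
    have hlim : Tendsto (fun n : ℕ => ENNReal.ofReal (1 - (1 - (t / n) / (2 * L)) ^ n)) atTop
        (nhds (ENNReal.ofReal (1 - Real.exp (-t / (2 * L))))) :=
      (ENNReal.continuous_ofReal.tendsto _).comp (hre.const_sub 1)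
    have hev : ∀ᶠ n : ℕ in atTop,
        polMeasure 1 L n {σs | (n : ℝ) * ‖chain σs x₀‖ ≤ t}
          = ENNReal.ofReal (1 - (1 - (t / n) / (2 * L)) ^ n) := by
      have h0 : Tendsto (fun n : ℕ => t / n) atTop (nhds 0) :=
        tendsto_const_div_atTop_nhds_zero_nat t
      filter_upwards [h0.eventually_lt_const hx₀, eventually_ge_atTop 1] with n h1 h2
      have hn0 : (0:ℝ) < (n : ℝ) := by exact_mod_cast h2
      have hs0 : 0 ≤ t / n := div_nonneg ht hn0.le
      have hsum : ‖x₀‖ + t / n < 2 * L := by linarith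
      have hset : {σs : Fin n → Euc 1 | (n : ℝ) * ‖chain σs x₀‖ ≤ t}
          = {σs : Fin n → Euc 1 | t / n < ‖chain σs x₀‖}ᶜ := by
        ext σs
        simp only [mem_setOf_eq, mem_compl_iff, not_lt]
        rw [le_div_iff₀ hn0, mul_comm]
      haveI := isProb_pol hL n
      rw [hset, prob_compl_eq_one_sub (measurable_chain_set x₀ (t / n) n),
        measure_chain_gt hL x₀ (t / n) hs0 h1 hsum n]
      have ha : 0 ≤ 1 - (t / n) / (2 * L) := by
        have hlt1 : (t / n) / (2 * L) < 1 :=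
          (div_lt_one (by positivity)).mpr (lt_trans h1 hz2L)
        linarith
      rw [← ENNReal.ofReal_pow ha, ENNReal.ofReal_sub _ (pow_nonneg ha n), ENNReal.ofReal_one]
    exact Filter.Tendsto.congr' (Filter.EventuallyEq.symm hev) hlim
  · set z := ‖x₀‖ with hzdef
    set q := 1 - z / (2 * L) with hq
    have hzq : z / (2 * L) < 1 := (div_lt_one (by positivity)).mpr hz2L
    have hq0 : 0 ≤ q := by rw [hq]; linarith
    have hq1 : q < 1 := by
      rw [hq]
      have : 0 < z / (2 * L) := div_pos hx₀ (by positivity)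
      linarith
    have hzn : ∀ n : ℕ, zchain 1 L x₀ n = (2 * L / ((n : ℝ) + 1)) * (1 - q ^ (n + 1)) := by
      intro n
      haveI := isProb_pol hL n
      have hmeas := (measurable_chain x₀ n).norm
      have hint : Integrable (fun σs => ‖chain σs x₀‖) (polMeasure 1 L n) := by
        apply Integrable.mono' (integrable_const z) hmeas.aestronglyMeasurable
        exact Eventually.of_forall fun σs => by
          rw [norm_norm]; exact chain_norm_le x₀ σs
      rw [zchain, hint.integral_eq_integral_meas_lt
        (Eventually.of_forall fun σs => norm_nonneg _)]
      have hfun : EqOn (fun s => (polMeasure 1 L n {σs | s < ‖chain σs x₀‖}).toReal)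
          ((Ioo (0:ℝ) z).indicator fun s => (1 - s / (2 * L)) ^ n) (Ioi 0) := by
        intro s hs
        rcases lt_or_ge s z with hlt | hge
        · have h2 : ‖x₀‖ + s < 2 * L := by
            rw [← hzdef]; linarith
          have ha : 0 ≤ 1 - s / (2 * L) := by
            have : s / (2 * L) < 1 := (div_lt_one (by positivity)).mpr (by linarith)
            linarith
          simp only
          rw [measure_chain_gt hL x₀ s (le_of_lt hs) hlt h2 n,
            ← ENNReal.ofReal_pow ha, ENNReal.toReal_ofReal (pow_nonneg ha n),
            indicator_of_mem (mem_Ioo.mpr ⟨hs, hlt⟩)]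
        · have hempty : {σs : Fin n → Euc 1 | s < ‖chain σs x₀‖} = ∅ := by
            apply eq_empty_of_forall_notMem
            intro σs hmem
            exact absurd hmem (not_lt.mpr (le_trans (chain_norm_le x₀ σs) hge))
          simp only
          rw [hempty, measure_empty, ENNReal.toReal_zero,
            indicator_of_notMem (fun hmem => absurd hmem.2 (not_lt.mpr hge))]
      simp only [measureReal_def]
      rw [setIntegral_congr_fun measurableSet_Ioi hfun,
        setIntegral_indicator measurableSet_Ioo,
        inter_eq_right.mpr Ioo_subset_Ioi_self,
        ← integral_Ioc_eq_integral_Ioo, ← intervalIntegral.integral_of_le hx₀.le]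
      have hderiv : ∀ s ∈ uIcc (0:ℝ) z,
          HasDerivAt (fun s : ℝ => -(2 * L / ((n:ℝ) + 1)) * (1 - s / (2 * L)) ^ (n + 1))
            ((1 - s / (2 * L)) ^ n) s := by
        intro s _
        have h0 : HasDerivAt (fun s : ℝ => 1 - s / (2 * L)) (-(1 / (2 * L))) s :=
          ((hasDerivAt_id s).div_const (2 * L)).const_sub 1
        have h1 := (h0.pow (n + 1)).const_mul (-(2 * L / ((n:ℝ) + 1)))
        refine h1.congr_deriv ?_
        simp only [Nat.add_sub_cancel]
        push_cast
        have hn1 : ((n:ℝ) + 1) ≠ 0 := by positivity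
        field_simp
      rw [intervalIntegral.integral_eq_sub_of_hasDerivAt hderiv
        (((continuous_const.sub (continuous_id.div_const _)).pow _).intervalIntegrable 0 z)]
      rw [hq]
      norm_num
      ring
    have hqlim : Tendsto (fun n : ℕ => q ^ (n + 1)) atTop (nhds 0) :=
      (tendsto_pow_atTop_nhds_zero_of_lt_one hq0 hq1).comp (tendsto_add_atTop_nat 1)
    have hnn : Tendsto (fun n : ℕ => (n : ℝ) / ((n : ℝ) + 1)) atTop (nhds 1) :=
      tendsto_natCast_div_add_atTop 1
    have hmain : Tendsto (fun n : ℕ => ((n:ℝ) / ((n:ℝ) + 1)) * (2 * L * (1 - q ^ (n + 1))))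
        atTop (nhds (1 * (2 * L * (1 - 0)))) :=
      hnn.mul (tendsto_const_nhds.mul (tendsto_const_nhds.sub hqlim))
    have heq : (1 : ℝ) * (2 * L * (1 - 0)) = 2 * L := by ring
    rw [heq] at hmain
    refine hmain.congr fun n => ?_
    rw [hzn n]
    ring

end
end
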